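/- arXiv:2110.09701 — 4 statements merged into one kernel-verified Lean document; each statement's English description precedes it below -/
import Mathlib

section
/- Let n ≥ 2 and let a ∈ T_n have rank 1. Then the minimum transformation degree of the variant T_n^a equals min{2A + 3B + C + D : A, B, C, D integers, 0 ≤ A ≤ 2, B ≥ 0, D ≥ 0, C ≥ 2, 2^A·3^B·C ≥ n, and C^D ≥ n^{n−1}}. -/
/-- Multiplication of the full transformation semigroup: `(f * g) x = g (f x)`. -/
def tMul {n : ℕ} (f g : Fin n → Fin n) : Fin n → Fin n := fun x => g (f x)

/-- The rank of a transformation: the cardinality of its image. -/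
def trank {n : ℕ} (f : Fin n → Fin n) : ℕ := (Finset.univ.image f).card

/-- The minimum transformation degree of the variant `T_n^a` (operation
`f ⋆ g = fun x => g (a (f x))`): the least `m ≥ 1` such that there is an injective
semigroup homomorphism from `T_n^a` into `T_m`. -/
noncomputable def variantDegree (n : ℕ) (a : Fin n → Fin n) : ℕ :=
  sInf {m | 1 ≤ m ∧ ∃ φ : (Fin n → Fin n) → (Fin m → Fin m), Function.Injective φ ∧
      ∀ f g : Fin n → Fin n, φ (fun x => g (a (f x))) = tMul (φ f) (φ g)}

section Aux


lemma normalizeAB : ∀ A B : ℕ, ∃ A' B', A' ≤ 2 ∧ 2*A' + 3*B' ≤ 2*A + 3*B ∧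
    2^A * 3^B ≤ 2^A' * 3^B' := by
  intro A
  induction A using Nat.strong_induction_on with
  | _ A ih =>
    intro B
    by_cases hA : A ≤ 2
    · exact ⟨A, B, hA, le_rfl, le_rfl⟩
    · obtain ⟨A'', rfl⟩ : ∃ A'', A = A'' + 3 := ⟨A - 3, by omega⟩
      obtain ⟨A', B', h1, h2, h3⟩ := ih A'' (by omega) (B+2)
      refine ⟨A', B', h1, by omega, ?_⟩
      calc 2^(A''+3) * 3^B = 8*(2^A''*3^B) := by ring
        _ ≤ 9*(2^A''*3^B) := by omega
        _ = 2^A'' * 3^(B+2) := by ring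
        _ ≤ 2^A' * 3^B' := h3

lemma singleAB (s : ℕ) : ∃ A B, 2*A + 3*B ≤ s ∧ s ≤ 2^A * 3^B := by
  induction s using Nat.strong_induction_on with
  | _ s ih =>
    match s, ih with
    | 0, _ => exact ⟨0,0, by norm_num, by norm_num⟩
    | 1, _ => exact ⟨0,0, by norm_num, by norm_num⟩
    | 2, _ => exact ⟨1,0, by norm_num, by norm_num⟩
    | 3, _ => exact ⟨0,1, by norm_num, by norm_num⟩
    | 4, _ => exact ⟨2,0, by norm_num, by norm_num⟩
    | 5, _ => exact ⟨1,1, by norm_num, by norm_num⟩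
    | (s+6), ih =>
      obtain ⟨A, B, h1, h2⟩ := ih (s+3) (by omega)
      exact ⟨A, B+1, by omega, by
        calc s + 6 ≤ 3*(s+3) := by omega
        _ ≤ 3*(2^A*3^B) := by omega
        _ = 2^A * 3^(B+1) := by ring⟩

/-- Combine over a finset. -/
lemma finsetAB {ι : Type*} (t : Finset ι) (s : ι → ℕ) :
    ∃ A B, 2*A + 3*B ≤ ∑ q ∈ t, s q ∧ ∏ q ∈ t, s q ≤ 2^A * 3^B := by
  classical
  induction t using Finset.induction_on with
  | empty => exact ⟨0, 0, by simp, by simp⟩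
  | insert _ _ hq ih =>
    rename_i q t'
    obtain ⟨A, B, h1, h2⟩ := ih
    obtain ⟨A₀, B₀, g1, g2⟩ := singleAB (s q)
    refine ⟨A₀ + A, B₀ + B, ?_, ?_⟩
    · rw [Finset.sum_insert hq]; omega
    · rw [Finset.prod_insert hq, pow_add, pow_add]
      calc s q * ∏ x ∈ t', s x ≤ (2^A₀*3^B₀) * (2^A*3^B) := Nat.mul_le_mul g2 h2
        _ = 2^A₀*2^A*(3^B₀*3^B) := by ring

lemma chooseABCD {ι : Type*} [Fintype ι] (n : ℕ) (hn : 2 ≤ n) (s d : ι → ℕ)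
    (hs : ∀ q, 1 ≤ s q) (h1 : n ≤ ∏ q, s q) (h2 : n^(n-1) ≤ ∏ q, s q ^ d q) :
    ∃ A B C D, A ≤ 2 ∧ 2 ≤ C ∧ n ≤ 2^A*3^B*C ∧ n^(n-1) ≤ C^D ∧
      2*A+3*B+C+D ≤ ∑ q, (s q + d q) := by
  classical
  have hne : (Finset.univ : Finset ι).Nonempty := by
    rcases (Finset.univ : Finset ι).eq_empty_or_nonempty with h | h
    · exfalso; rw [h, Finset.prod_empty] at h1; omega
    · exact h
  obtain ⟨q₀, -, hq₀⟩ := Finset.exists_max_image Finset.univ s hne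
  set C := s q₀ with hC
  have hC2 : 2 ≤ C := by
    by_contra h
    have : ∀ q ∈ Finset.univ, s q = 1 := by
      intro q _
      have := hq₀ q (Finset.mem_univ q)
      have := hs q
      omega
    rw [Finset.prod_congr rfl this, Finset.prod_const_one] at h1
    omega
  have hCD : n^(n-1) ≤ C^(∑ q, d q) := by
    calc n^(n-1) ≤ ∏ q, s q ^ d q := h2
      _ ≤ ∏ q, C ^ d q := Finset.prod_le_prod' fun q _ =>
          Nat.pow_le_pow_left (hq₀ q (Finset.mem_univ q)) _
      _ = C ^ (∑ q, d q) := by rw [Finset.prod_pow_eq_pow_sum]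
  obtain ⟨A₀, B₀, g1, g2⟩ := finsetAB (Finset.univ.erase q₀) s
  obtain ⟨A, B, hA2, hsum, hprod⟩ := normalizeAB A₀ B₀
  refine ⟨A, B, C, ∑ q, d q, hA2, hC2, ?_, hCD, ?_⟩
  · calc n ≤ ∏ q, s q := h1
      _ = C * ∏ q ∈ Finset.univ.erase q₀, s q :=
        (Finset.mul_prod_erase Finset.univ s (Finset.mem_univ q₀)).symm
      _ ≤ C * (2^A₀ * 3^B₀) := Nat.mul_le_mul_left _ g2
      _ ≤ C * (2^A * 3^B) := Nat.mul_le_mul_left _ hprod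
      _ = 2^A * 3^B * C := by ring
  · have : C + ∑ q ∈ Finset.univ.erase q₀, s q = ∑ q, s q :=
      Finset.add_sum_erase Finset.univ s (Finset.mem_univ q₀)
    have hsplit : ∑ q, (s q + d q) = ∑ q, s q + ∑ q, d q := Finset.sum_add_distrib
    omega

lemma upperBound (n : ℕ) (hn : 2 ≤ n) (c : Fin n) (A B C D : ℕ) (hC : 2 ≤ C)
    (h1 : n ≤ 2^A * 3^B * C) (h2 : n^(n-1) ≤ C^D) :
    ∃ φ : (Fin n → Fin n) → (Fin (2*A+3*B+C+D) → Fin (2*A+3*B+C+D)),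
      Function.Injective φ ∧ ∀ f g : Fin n → Fin n,
        φ (fun _ => g c) = tMul (φ f) (φ g) := by
  classical
  -- the model type
  set Ω := ((Fin A × Fin 2) ⊕ ((Fin B × Fin 3) ⊕ (Fin C ⊕ Fin D))) with hΩ
  have hcard : Fintype.card Ω = 2*A+3*B+C+D := by
    simp [hΩ, Fintype.card_sum, Fintype.card_prod]
    ring
  obtain ⟨e⟩ : Nonempty (Ω ≃ Fin (2*A+3*B+C+D)) := ⟨Fintype.equivFinOfCardEq hcard⟩
  -- encoding of values
  obtain ⟨enc⟩ : Nonempty (Fin n ↪ ((Fin A → Fin 2) × (Fin B → Fin 3) × Fin C)) := by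
    apply Function.Embedding.nonempty_of_card_le
    simp only [Fintype.card_prod, Fintype.card_fin, Fintype.card_pi, Finset.prod_const,
      Finset.card_univ]
    calc n ≤ 2^A * 3^B * C := h1
      _ = 2^A * (3^B * C) := by ring
  -- encoding of the rest
  obtain ⟨σ⟩ : Nonempty (({x : Fin n // x ≠ c} → Fin n) ↪ (Fin D → Fin C)) := by
    apply Function.Embedding.nonempty_of_card_le
    have hs : Fintype.card {x : Fin n // x ≠ c} = n - 1 := by
      rw [Fintype.card_subtype_compl, Fintype.card_subtype_eq, Fintype.card_fin]
    simp only [Fintype.card_pi, Finset.prod_const, Finset.card_univ, Fintype.card_fin, hs]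
    exact h2
  set res : (Fin n → Fin n) → ({x : Fin n // x ≠ c} → Fin n) :=
    fun f x => f x.1 with hres
  set η : (Fin n → Fin n) → (Fin D → Fin C) := fun f =>
    Equiv.swap (σ (fun _ => f c)) (fun _ => (enc (f c)).2.2) (σ (res f)) with hη
  have ηconst : ∀ v : Fin n, η (fun _ => v) = fun _ => (enc v).2.2 := by
    intro v
    have : res (fun _ => v) = fun _ => v := rfl
    rw [hη]
    simp only [this]
    exact Equiv.swap_apply_left _ _
  have ηinj : ∀ f f' : Fin n → Fin n, f c = f' c → η f = η f' → f = f' := by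
    intro f f' hc hη'
    rw [hη] at hη'
    simp only [hc] at hη'
    have := (Equiv.swap _ _).injective hη'
    have hres' : res f = res f' := σ.injective this
    funext x
    by_cases hx : x = c
    · rw [hx, hc]
    · exact congrFun hres' ⟨x, hx⟩
  -- the transformation
  set Φ : (Fin n → Fin n) → Ω → Ω := fun f ω =>
    match ω with
    | .inl (i, _) => .inl (i, (enc (f c)).1 i)
    | .inr (.inl (i, _)) => .inr (.inl (i, (enc (f c)).2.1 i))
    | .inr (.inr (.inl _)) => .inr (.inr (.inl (enc (f c)).2.2))
    | .inr (.inr (.inr j)) => .inr (.inr (.inl (η f j))) with hΦ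
  have Φhom : ∀ f g : Fin n → Fin n, Φ (fun _ => g c) = fun ω => Φ g (Φ f ω) := by
    intro f g
    funext ω
    rcases ω with ⟨i, b⟩ | ⟨⟨i, b⟩ | (z | j)⟩ <;>
      simp only [hΦ, ηconst (g c)]
  have Φinj : Function.Injective Φ := by
    intro f f' h
    have hc : f c = f' c := by
      apply enc.injective
      have h1' : (enc (f c)).1 = (enc (f' c)).1 := by
        funext i
        have h0 := congrFun h (.inl (i, 0))
        simp only [hΦ] at h0
        exact congrArg Prod.snd (Sum.inl_injective h0)
      have h2' : (enc (f c)).2.1 = (enc (f' c)).2.1 := by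
        funext i
        have h0 := congrFun h (.inr (.inl (i, 0)))
        simp only [hΦ] at h0
        exact congrArg Prod.snd (Sum.inl_injective (Sum.inr_injective h0))
      have h3' : (enc (f c)).2.2 = (enc (f' c)).2.2 := by
        have h0 := congrFun h (.inr (.inr (.inl ⟨0, by omega⟩)))
        simp only [hΦ] at h0
        exact Sum.inl_injective (Sum.inr_injective (Sum.inr_injective h0))
      exact Prod.ext h1' (Prod.ext h2' h3')
    apply ηinj f f' hc
    funext j
    have h0 := congrFun h (.inr (.inr (.inr j)))
    simp only [hΦ] at h0
    exact Sum.inl_injective (Sum.inr_injective (Sum.inr_injective h0))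
  refine ⟨fun f x => e (Φ f (e.symm x)), ?_, ?_⟩
  · intro f f' h
    apply Φinj
    funext ω
    have := congrFun h (e ω)
    simpa using this
  · intro f g
    funext x
    simp only [tMul, Equiv.symm_apply_apply]
    rw [Φhom f g]

lemma lowerBound (n : ℕ) (hn : 2 ≤ n) (c : Fin n) (m : ℕ)
    (φ : (Fin n → Fin n) → (Fin m → Fin m)) (hinj : Function.Injective φ)
    (hom : ∀ f g : Fin n → Fin n, φ (fun _ => g c) = tMul (φ f) (φ g)) :
    ∃ A B C D, A ≤ 2 ∧ 2 ≤ C ∧ n ≤ 2^A*3^B*C ∧ n^(n-1) ≤ C^D ∧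
      2*A+3*B+C+D ≤ m := by
  classical
  -- basic consequences of the homomorphism property
  have hkey : ∀ (g f : Fin n → Fin n) (t : Fin m),
      φ g (φ f t) = φ (fun _ => g c) t := fun g f t => (congrFun (hom f g) t).symm
  -- the setoid generated by t ~ φ f t
  set r : Fin m → Fin m → Prop := fun t t' => ∃ f, φ f t = t' with hr
  set st : Setoid (Fin m) := Relation.EqvGen.setoid r with hst
  set Q := Quotient st with hQ
  -- constant maps are constant on classes
  have hEclass : ∀ (u : Fin n) (t t' : Fin m), Relation.EqvGen r t t' →
      φ (fun _ => u) t = φ (fun _ => u) t' := by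
    intro u t t' h
    induction h with
    | rel a b hab =>
      obtain ⟨f, rfl⟩ := hab
      exact (hkey (fun _ => u) f a).symm
    | refl a => rfl
    | symm a b _ ih => exact ih.symm
    | trans a b cc _ _ ih1 ih2 => exact ih1.trans ih2
  have hEq : ∀ (u : Fin n) (t t' : Fin m), (⟦t⟧ : Q) = ⟦t'⟧ →
      φ (fun _ => u) t = φ (fun _ => u) t' := by
    intro u t t' h
    exact hEclass u t t' (Quotient.exact h)
  -- the partition and cores
  set P : Q → Finset (Fin m) := fun q => Finset.univ.filter (fun t => (⟦t⟧ : Q) = q) with hP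
  set T : Q → Finset (Fin m) := fun q =>
    Finset.univ.filter (fun w => ∃ f t, (⟦t⟧ : Q) = q ∧ φ f t = w) with hT
  have hmemP : ∀ t : Fin m, t ∈ P ⟦t⟧ := by
    intro t
    exact Finset.mem_filter.mpr ⟨Finset.mem_univ t, rfl⟩
  have hmemT : ∀ (f : Fin n → Fin n) (q : Q) (t : Fin m), t ∈ P q → φ f t ∈ T q := by
    intro f q t ht
    simp only [hP, Finset.mem_filter, Finset.mem_univ, true_and] at ht
    simp only [hT, Finset.mem_filter, Finset.mem_univ, true_and]
    exact ⟨f, t, ht, rfl⟩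
  have hTsubP : ∀ q, T q ⊆ P q := by
    intro q w hw
    simp only [hT, Finset.mem_filter, Finset.mem_univ, true_and] at hw
    obtain ⟨f, t, ht, rfl⟩ := hw
    simp only [hP, Finset.mem_filter, Finset.mem_univ, true_and]
    rw [← ht]
    exact (Quotient.sound (Relation.EqvGen.rel t (φ f t) ⟨f, rfl⟩)).symm
  -- every φ g is constant on T q
  have hconstT : ∀ (g : Fin n → Fin n) (q : Q) (w : Fin m), w ∈ T q →
      φ g w = φ (fun _ => g c) (Quotient.out q) := by
    intro g q w hw
    simp only [hT, Finset.mem_filter, Finset.mem_univ, true_and] at hw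
    obtain ⟨f, t, ht, rfl⟩ := hw
    rw [hkey g f t]
    exact hEq (g c) t (Quotient.out q) (by rw [ht, Quotient.out_eq])
  have hTne : ∀ q : Q, (T q).Nonempty := by
    intro q
    refine ⟨φ (fun _ => c) (Quotient.out q), hmemT _ q _ ?_⟩
    have := hmemP (Quotient.out q)
    rwa [Quotient.out_eq] at this
  -- counting 1 : n ≤ ∏ card (T q)
  have hcount1 : n ≤ ∏ q : Q, (T q).card := by
    have : Function.Injective (fun (v : Fin n) (q : Q) =>
        (⟨φ (fun _ => v) (Quotient.out q), by
          have := hmemT (fun _ => v) q (Quotient.out q) (by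
            have := hmemP (Quotient.out q); rwa [Quotient.out_eq] at this)
          exact this⟩ : {x // x ∈ T q})) := by
      intro v v' h
      have hφ : φ (fun _ => v) = φ (fun _ => v') := by
        funext t
        have h1 := congrArg Subtype.val (congrFun h ⟦t⟧)
        simp only at h1
        calc φ (fun _ => v) t
            = φ (fun _ => v) (Quotient.out (⟦t⟧ : Q)) :=
              hEq v t _ (by rw [Quotient.out_eq])
          _ = φ (fun _ => v') (Quotient.out (⟦t⟧ : Q)) := h1
          _ = φ (fun _ => v') t := hEq v' _ t (by rw [Quotient.out_eq])
      have := hinj hφ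
      exact congrFun this c
    calc n = Fintype.card (Fin n) := (Fintype.card_fin n).symm
      _ ≤ Fintype.card (∀ q : Q, {x // x ∈ T q}) := Fintype.card_le_of_injective _ this
      _ = ∏ q : Q, (T q).card := by
        rw [Fintype.card_pi]
        exact Finset.prod_congr rfl fun q _ => Fintype.card_coe _
  -- counting 2 : n^(n-1) ≤ ∏ card (T q) ^ card (P q \ T q)
  have hcount2 : n^(n-1) ≤ ∏ q : Q, (T q).card ^ (P q \ T q).card := by
    set ext : ({x : Fin n // x ≠ c} → Fin n) → (Fin n → Fin n) := fun w x =>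
      if h : x = c then c else w ⟨x, h⟩ with hext
    have hextc : ∀ w, ext w c = c := fun w => dif_pos rfl
    have : Function.Injective (fun (w : {x : Fin n // x ≠ c} → Fin n)
        (q : Q) (t : {x // x ∈ P q \ T q}) =>
        (⟨φ (ext w) t.1, hmemT (ext w) q t.1 (Finset.mem_sdiff.mp t.2).1⟩ :
          {x // x ∈ T q})) := by
      intro w w' h
      have hφ : φ (ext w) = φ (ext w') := by
        funext t
        by_cases htT : t ∈ T ⟦t⟧
        · rw [hconstT (ext w) ⟦t⟧ t htT, hconstT (ext w') ⟦t⟧ t htT, hextc, hextc]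
        · have htP : t ∈ P ⟦t⟧ \ T ⟦t⟧ := Finset.mem_sdiff.mpr ⟨hmemP t, htT⟩
          have h1 := congrArg Subtype.val (congrFun (congrFun h ⟦t⟧) ⟨t, htP⟩)
          simpa using h1
      have hee : ext w = ext w' := hinj hφ
      funext x
      have h2 := congrFun hee x.1
      simp only [hext] at h2
      rw [dif_neg x.2, dif_neg x.2] at h2
      exact h2
    have e1 : Fintype.card ({x : Fin n // x ≠ c} → Fin n) = n^(n-1) := by
      rw [Fintype.card_fun, Fintype.card_fin, Fintype.card_subtype_compl,
        Fintype.card_subtype_eq, Fintype.card_fin]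
    have e2 : Fintype.card (∀ q : Q, ({x // x ∈ P q \ T q} → {x // x ∈ T q}))
        = ∏ q : Q, (T q).card ^ (P q \ T q).card := by
      rw [Fintype.card_pi]
      refine Finset.prod_congr rfl fun q _ => ?_
      rw [Fintype.card_fun, Fintype.card_coe, Fintype.card_coe]
    have e3 := Fintype.card_le_of_injective _ this
    rw [e1, e2] at e3
    exact e3
  -- counting 3 : ∑ card (P q) = m
  have hcount3 : ∑ q : Q, (P q).card = m := by
    have := Finset.card_eq_sum_card_fiberwise
      (f := fun t : Fin m => (⟦t⟧ : Q)) (s := Finset.univ) (t := Finset.univ)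
      (fun x _ => Finset.mem_univ _)
    simp only [Finset.card_univ, Fintype.card_fin] at this
    exact this.symm
  -- assemble
  obtain ⟨A, B, C, D, h1, h2, h3, h4, h5⟩ := chooseABCD n hn
    (fun q : Q => (T q).card) (fun q => (P q \ T q).card)
    (fun q => Finset.card_pos.mpr (hTne q)) hcount1 hcount2
  refine ⟨A, B, C, D, h1, h2, h3, h4, le_trans h5 (le_of_eq ?_)⟩
  calc ∑ q : Q, ((T q).card + (P q \ T q).card)
      = ∑ q : Q, (P q).card := Finset.sum_congr rfl (fun q _ => by
        rw [add_comm]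
        exact Finset.card_sdiff_add_card_eq_card (hTsubP q))
    _ = m := hcount3

end Aux

/-- For `n ≥ 2` and a rank-`1` sandwich element `a ∈ T_n`, the degree of the variant
`T_n^a` equals `min { 2A + 3B + C + D : 0 ≤ A ≤ 2, B, D ≥ 0, C ≥ 2, 2^A·3^B·C ≥ n,
C^D ≥ n^(n-1) }`. -/
theorem variant_degree_rank_one_formula (n : ℕ) (hn : 2 ≤ n) (a : Fin n → Fin n)
    (ha : trank a = 1) :
    variantDegree n a
      = sInf {k | ∃ A B C D : ℕ, A ≤ 2 ∧ 2 ≤ C ∧ n ≤ 2 ^ A * 3 ^ B * C ∧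
          n ^ (n - 1) ≤ C ^ D ∧ k = 2 * A + 3 * B + C + D} := by
  classical
  obtain ⟨c, hc⟩ : ∃ c : Fin n, ∀ x, a x = c := by
    rw [trank] at ha
    obtain ⟨b, hb⟩ := Finset.card_eq_one.mp ha
    refine ⟨b, fun x => ?_⟩
    have hx : a x ∈ Finset.univ.image a := Finset.mem_image_of_mem a (Finset.mem_univ x)
    rw [hb, Finset.mem_singleton] at hx
    exact hx
  have hrw : ∀ f g : Fin n → Fin n, (fun x => g (a (f x))) = (fun _ => g c) := by
    intro f g; funext x; rw [hc]
  rw [variantDegree]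
  set L := {m | 1 ≤ m ∧ ∃ φ : (Fin n → Fin n) → (Fin m → Fin m), Function.Injective φ ∧
      ∀ f g : Fin n → Fin n, φ (fun x => g (a (f x))) = tMul (φ f) (φ g)} with hL
  set R := {k | ∃ A B C D : ℕ, A ≤ 2 ∧ 2 ≤ C ∧ n ≤ 2 ^ A * 3 ^ B * C ∧
      n ^ (n - 1) ≤ C ^ D ∧ k = 2 * A + 3 * B + C + D} with hR
  have hUL : ∀ A B C D : ℕ, 2 ≤ C → n ≤ 2^A*3^B*C → n^(n-1) ≤ C^D →
      (2*A+3*B+C+D) ∈ L := by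
    intro A B C D hC h1 h2
    obtain ⟨φ, hφi, hφh⟩ := upperBound n hn c A B C D hC h1 h2
    simp only [hL, Set.mem_setOf_eq]
    refine ⟨by omega, φ, hφi, fun f g => ?_⟩
    rw [hrw f g]
    exact hφh f g
  have hn1 : n ≤ 2^0*3^0*n := by norm_num
  have hRne : R.Nonempty := ⟨2*0+3*0+n+(n-1), 0, 0, n, n-1, by omega, hn, hn1, le_rfl, rfl⟩
  have hLne : L.Nonempty := ⟨_, hUL 0 0 n (n-1) hn hn1 le_rfl⟩
  apply le_antisymm
  · obtain ⟨A, B, C, D, hA, hC, h1, h2, hk⟩ := Nat.sInf_mem hRne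
    rw [hk]
    exact Nat.sInf_le (hUL A B C D hC h1 h2)
  · obtain ⟨h1m, φ, hφi, hφh⟩ := Nat.sInf_mem hLne
    have hφh' : ∀ f g : Fin n → Fin n, φ (fun _ => g c) = tMul (φ f) (φ g) := by
      intro f g; rw [← hrw f g]; exact hφh f g
    obtain ⟨A, B, C, D, hA, hC, h1, h2, h5⟩ := lowerBound n hn c (sInf L) φ hφi hφh'
    exact le_trans (Nat.sInf_le ⟨A, B, C, D, hA, hC, h1, h2, rfl⟩) h5
end

section
/- Let a ∈ T_n have rank 1. If 1 ≤ n ≤ 15, then the minimum transformation degree of the variant T_n^a equals 2n − 1; if n ≥ 16, then the minimum transformation degree of T_n^a is at most 2n − 2. -/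
lemma digit_sum_lt (b : ℕ) (g : ℕ → ℕ) : ∀ (k : ℕ), (∀ j, j < k → g j < b) →
    (∑ j ∈ Finset.range k, g j * b ^ j) < b ^ k := by
  intro k
  induction k with
  | zero => intro _; simp
  | succ k ih =>
    intro hg
    rw [Finset.sum_range_succ]
    have h1 : (∑ j ∈ Finset.range k, g j * b ^ j) < b ^ k := ih (fun j hj => hg j (by omega))
    have h2 : g k < b := hg k (by omega)
    have h3 : (g k + 1) * b ^ k ≤ b * b ^ k := Nat.mul_le_mul_right _ (by omega)
    have h4 : b ^ (k+1) = b * b ^ k := by rw [pow_succ]; ring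
    nlinarith

lemma digit_head (b : ℕ) (g : ℕ → ℕ) (k : ℕ) (hg : ∀ j, j < k + 1 → g j < b) :
    (∑ j ∈ Finset.range (k+1), g j * b ^ j) % b = g 0 ∧
    (∑ j ∈ Finset.range (k+1), g j * b ^ j) / b = ∑ j ∈ Finset.range k, g (j+1) * b ^ j := by
  have hrw : (∑ j ∈ Finset.range (k+1), g j * b ^ j)
      = g 0 + b * (∑ j ∈ Finset.range k, g (j+1) * b ^ j) := by
    rw [Finset.sum_range_succ' (fun j => g j * b ^ j) k]
    simp only [pow_zero, mul_one, pow_succ]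
    rw [add_comm, Finset.mul_sum]
    congr 1
    apply Finset.sum_congr rfl; intro j _; ring
  have hb : 0 < b := by have := hg 0 (by omega); omega
  constructor
  · rw [hrw, Nat.add_mul_mod_self_left, Nat.mod_eq_of_lt (hg 0 (by omega))]
  · rw [hrw, Nat.add_mul_div_left _ _ hb, Nat.div_eq_of_lt (hg 0 (by omega))]; omega

lemma digit_extract (b : ℕ) : ∀ (j k : ℕ) (g : ℕ → ℕ), (∀ i, i < k → g i < b) → j < k →
    (∑ i ∈ Finset.range k, g i * b ^ i) / b ^ j % b = g j := by
  intro j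
  induction j with
  | zero =>
    intro k g hg hk
    obtain ⟨k', rfl⟩ : ∃ k', k = k' + 1 := ⟨k - 1, by omega⟩
    simpa using (digit_head b g k' hg).1
  | succ j ih =>
    intro k g hg hk
    obtain ⟨k', rfl⟩ : ∃ k', k = k' + 1 := ⟨k - 1, by omega⟩
    have hdd : (∑ i ∈ Finset.range (k'+1), g i * b ^ i) / b ^ (j+1)
        = ((∑ i ∈ Finset.range (k'+1), g i * b ^ i) / b) / b ^ j := by
      rw [Nat.div_div_eq_div_mul, ← pow_succ']
    rw [hdd, (digit_head b g k' hg).2]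
    exact ih k' (fun i => g (i+1)) (fun i hi => hg (i+1) (by omega)) (by omega)

lemma digits_det (b : ℕ) : ∀ (k x y : ℕ), x < b ^ k → y < b ^ k →
    (∀ j, j < k → x / b ^ j % b = y / b ^ j % b) → x = y := by
  intro k
  induction k with
  | zero => intro x y hx hy _; simp at hx hy; omega
  | succ k ih =>
    intro x y hx hy h
    have hb : 1 ≤ b := by
      by_contra hb; push_neg at hb
      interval_cases b <;> simp at hx
    have h0 : x % b = y % b := by simpa using h 0 (by omega)
    have hxd : x / b < b ^ k := by
      rw [Nat.div_lt_iff_lt_mul (by omega)]; rw [pow_succ] at hx; omega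
    have hyd : y / b < b ^ k := by
      rw [Nat.div_lt_iff_lt_mul (by omega)]; rw [pow_succ] at hy; omega
    have hsh : ∀ j, j < k → (x / b) / b ^ j % b = (y / b) / b ^ j % b := by
      intro j hj
      rw [Nat.div_div_eq_div_mul, Nat.div_div_eq_div_mul, ← pow_succ']
      exact h (j+1) (by omega)
    have heq := ih (x / b) (y / b) hxd hyd hsh
    have e1 := Nat.div_add_mod x b
    have e2 := Nat.div_add_mod y b
    have e3 : b * (x / b) = b * (y / b) := by rw [heq]
    omega


lemma keyArith (n : ℕ) (h2 : 2 ≤ n) (h15 : n ≤ 15) (U T : ℕ) (hU1 : 1 ≤ U)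
    (hU : U ≤ 2*n-2) (hn : n ≤ U * 2^(T-1)) : U^(2*n-2-U-T) < n^(n-1) := by
  by_cases hT : 2*n-2 ≤ U + T
  · have he : 2*n-2-U-T = 0 := by omega
    rw [he, pow_zero]
    exact Nat.one_lt_pow (by omega) (by omega)
  · have hc : ∀ n' < 16, ∀ U' < 29, ∀ T' < 29, (2 ≤ n' ∧ 1 ≤ U' ∧
        n' ≤ U' * 2^(T'-1)) → U'^(2*n'-2-U'-T') < n'^(n'-1) := by decide
    exact hc n (by omega) U (by omega) T (by omega) ⟨h2, hU1, hn⟩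


lemma capA : ∀ t, 8 ≤ t → 2^(2*t-1) ≤ t^(t-3) := by
  intro t ht
  induction t, ht using Nat.le_induction with
  | base => norm_num
  | succ t ht ih =>
    have h1 : 2^(2*(t+1)-1) = 2^(2*t-1) * 4 := by
      rw [show 2*(t+1)-1 = (2*t-1)+2 by omega, pow_add]; norm_num
    have h3 : 2^(2*t-1) * 4 ≤ t^(t-3) * t := by
      exact Nat.mul_le_mul ih (by omega)
    have h4 : t^(t-3) * t = t^(t-2) := by rw [← pow_succ]; congr 1; omega
    have h5 : t^(t-2) ≤ (t+1)^(t-2) := Nat.pow_le_pow_left (by omega) _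
    rw [h1, show t+1-3 = t-2 by omega]
    omega

lemma capC : ∀ t, 9 ≤ t → 4^t ≤ (t+1)^(t-3) := by
  intro t ht
  induction t, ht using Nat.le_induction with
  | base => norm_num
  | succ t ht ih =>
    have h1 : (4:ℕ)^(t+1) = 4^t * 4 := by rw [← pow_succ]
    have h3 : 4^t * 4 ≤ (t+1)^(t-3) * (t+1) := Nat.mul_le_mul ih (by omega)
    have h4 : (t+1)^(t-3) * (t+1) = (t+1)^(t-2) := by rw [← pow_succ]; congr 1; omega
    have h5 : (t+1)^(t-2) ≤ (t+1+1)^(t-2) := Nat.pow_le_pow_left (by omega) _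
    rw [h1, show t+1-3 = t-2 by omega]
    omega

lemma cap_ineq : ∀ n, 16 ≤ n → n^(n-1) ≤ ((n+1)/2)^(2*n-4-(n+1)/2) := by
  intro n hn
  rcases Nat.even_or_odd n with ⟨t, rfl⟩ | ⟨t, rfl⟩
  · have ht : 8 ≤ t := by omega
    have hu : (t + t + 1)/2 = t := by omega
    rw [hu]
    have he1 : t + t - 1 = 2*t-1 := by omega
    have he2 : 2*(t+t)-4-t = (t-3) + (2*t-1) := by omega
    have he3 : t + t = 2 * t := by omega
    rw [he1, he2, he3, pow_add, mul_pow]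
    exact Nat.mul_le_mul (capA t ht) le_rfl
  · have ht8 : 8 ≤ t := by omega
    have hu : (2*t+1+1)/2 = t+1 := by omega
    rw [hu]
    have he2 : 2*(2*t+1)-4-(t+1) = (t-3) + 2*t := by omega
    have he1 : 2*t+1-1 = 2*t := by omega
    rw [he1, he2, pow_add]
    by_cases h8 : t = 8
    · subst h8; norm_num
    · have ht : 9 ≤ t := by omega
      calc (2*t+1)^(2*t) ≤ (2*(t+1))^(2*t) := Nat.pow_le_pow_left (by omega) _
        _ = 2^(2*t) * (t+1)^(2*t) := by rw [mul_pow]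
        _ = 4^t * (t+1)^(2*t) := by rw [pow_mul]; norm_num
        _ ≤ (t+1)^(t-3) * (t+1)^(2*t) := Nat.mul_le_mul_right _ (capC t ht)



lemma upper1 (n : ℕ) (hn : 1 ≤ n) (c : Fin n) :
    ∃ φ : (Fin n → Fin n) → (Fin (2*n-1) → Fin (2*n-1)), Function.Injective φ ∧
      ∀ f g : Fin n → Fin n, φ (fun _ => g c) = tMul (φ f) (φ g) := by
  have hle : n ≤ 2*n-1 := by omega
  have hnpos : 0 < n := hn
  have hcn : (c:ℕ) < n := c.isLt
  refine ⟨fun f z => Fin.castLE hle (if h : (z:ℕ) < n then f c else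
      (if ((z:ℕ) - n) < (c:ℕ) then f ⟨((z:ℕ)-n) % n, Nat.mod_lt _ hnpos⟩
       else f ⟨((z:ℕ)-n+1) % n, Nat.mod_lt _ hnpos⟩)), ?_, ?_⟩
  · intro f g hfg
    have hval : ∀ z : Fin (2*n-1),
        (if h : (z:ℕ) < n then f c else
          (if ((z:ℕ) - n) < (c:ℕ) then f ⟨((z:ℕ)-n) % n, Nat.mod_lt _ hnpos⟩
           else f ⟨((z:ℕ)-n+1) % n, Nat.mod_lt _ hnpos⟩))
        = (if h : (z:ℕ) < n then g c else
          (if ((z:ℕ) - n) < (c:ℕ) then g ⟨((z:ℕ)-n) % n, Nat.mod_lt _ hnpos⟩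
           else g ⟨((z:ℕ)-n+1) % n, Nat.mod_lt _ hnpos⟩)) :=
      fun z => Fin.castLE_injective hle (congrFun hfg z)
    have hfgc : f c = g c := by
      have h0 := hval ⟨0, by omega⟩
      rwa [dif_pos (show ((⟨0, by omega⟩ : Fin (2*n-1)):ℕ) < n from hnpos),
           dif_pos (show ((⟨0, by omega⟩ : Fin (2*n-1)):ℕ) < n from hnpos)] at h0
    funext i
    by_cases hic : i = c
    · rw [hic]; exact hfgc
    · have hine : (i:ℕ) ≠ (c:ℕ) := fun h => hic (Fin.ext h)
      have hin : (i:ℕ) < n := i.isLt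
      by_cases hlt : (i:ℕ) < (c:ℕ)
      · set z : Fin (2*n-1) := ⟨n + (i:ℕ), by omega⟩ with hz
        have h0 := hval z
        have hnlt : ¬ ((z:ℕ) < n) := by show ¬ (n + (i:ℕ) < n); omega
        have hsub : (z:ℕ) - n = (i:ℕ) := by show n + (i:ℕ) - n = (i:ℕ); omega
        rw [dif_neg hnlt, dif_neg hnlt, hsub, if_pos hlt, if_pos hlt] at h0
        have : (⟨(i:ℕ) % n, Nat.mod_lt _ hnpos⟩ : Fin n) = i := by
          apply Fin.ext; simp only [Fin.val_mk]; rw [Nat.mod_eq_of_lt hin]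
        rwa [this] at h0
      · have hgt : (c:ℕ) < (i:ℕ) := by omega
        set z : Fin (2*n-1) := ⟨n + (i:ℕ) - 1, by omega⟩ with hz
        have h0 := hval z
        have hnlt : ¬ ((z:ℕ) < n) := by show ¬ (n + (i:ℕ) - 1 < n); omega
        have hsub : (z:ℕ) - n = (i:ℕ) - 1 := by show n + (i:ℕ) - 1 - n = (i:ℕ) - 1; omega
        have hnlt2 : ¬ ((i:ℕ) - 1 < (c:ℕ)) := by omega
        rw [dif_neg hnlt, dif_neg hnlt, hsub, if_neg hnlt2, if_neg hnlt2] at h0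
        have : (⟨((i:ℕ) - 1 + 1) % n, Nat.mod_lt _ hnpos⟩ : Fin n) = i := by
          apply Fin.ext; simp only [Fin.val_mk]
          rw [show (i:ℕ) - 1 + 1 = (i:ℕ) by omega, Nat.mod_eq_of_lt hin]
        rwa [this] at h0
  · intro f g
    funext z
    show Fin.castLE hle _ = Fin.castLE hle _
    congr 1
    have hlhs : (if h : (z:ℕ) < n then (fun _ : Fin n => g c) c else
          (if ((z:ℕ) - n) < (c:ℕ) then (fun _ : Fin n => g c) ⟨((z:ℕ)-n) % n, Nat.mod_lt _ hnpos⟩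
           else (fun _ : Fin n => g c) ⟨((z:ℕ)-n+1) % n, Nat.mod_lt _ hnpos⟩)) = g c := by
      split_ifs <;> rfl
    rw [hlhs]
    -- RHS : evaluate outer at castLE value
    set w : Fin n := (if h : (z:ℕ) < n then f c else
          (if ((z:ℕ) - n) < (c:ℕ) then f ⟨((z:ℕ)-n) % n, Nat.mod_lt _ hnpos⟩
           else f ⟨((z:ℕ)-n+1) % n, Nat.mod_lt _ hnpos⟩)) with hw
    show g c = (if h : ((Fin.castLE hle w :  Fin (2*n-1)):ℕ) < n then g c else _)
    rw [dif_pos (show ((Fin.castLE hle w : Fin (2*n-1)):ℕ) < n from w.isLt)]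




def nuF {n : ℕ} (c : Fin n) (j : ℕ) : Fin n :=
  if h : j < (c:ℕ) then ⟨j, lt_trans h c.isLt⟩
  else (if h2 : j + 1 < n then ⟨j+1, h2⟩ else c)

def dgtF {n : ℕ} (c : Fin n) (f : Fin n → Fin n) (j : ℕ) : ℕ :=
  if j < n - 1 then (f (nuF c j)).val else 0

def NF {n : ℕ} (c : Fin n) (f : Fin n → Fin n) : ℕ :=
  ∑ j ∈ Finset.range (n-1), dgtF c f j * n ^ j

def pvF (u B v : ℕ) : ℕ := ∑ j ∈ Finset.range B, (v/2) * u^j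

lemma nu_cover {n : ℕ} (c : Fin n) (i : Fin n) (hi : i ≠ c) :
    ∃ j, j < n - 1 ∧ nuF c j = i := by
  have hin : (i:ℕ) < n := i.isLt
  have hcn : (c:ℕ) < n := c.isLt
  have hine : (i:ℕ) ≠ (c:ℕ) := fun h => hi (Fin.ext h)
  by_cases hlt : (i:ℕ) < (c:ℕ)
  · exact ⟨(i:ℕ), by omega, by rw [nuF, dif_pos hlt]⟩
  · refine ⟨(i:ℕ) - 1, by omega, ?_⟩
    rw [nuF, dif_neg (by omega), dif_pos (by omega)]
    apply Fin.ext; simp only [Fin.val_mk]; omega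

lemma dgt_lt {n : ℕ} (hn : 1 ≤ n) (c : Fin n) (f : Fin n → Fin n) (j : ℕ) :
    dgtF c f j < n := by
  rw [dgtF]; split_ifs
  · exact (f _).isLt
  · omega

lemma NF_lt {n : ℕ} (hn : 1 ≤ n) (c : Fin n) (f : Fin n → Fin n) :
    NF c f < n ^ (n-1) :=
  digit_sum_lt n _ (n-1) (fun j _ => dgt_lt hn c f j)

lemma NF_inj {n : ℕ} (hn : 1 ≤ n) (c : Fin n) (f f' : Fin n → Fin n)
    (hc : f c = f' c) (hN : NF c f = NF c f') : f = f' := by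
  funext i
  by_cases hic : i = c
  · rw [hic]; exact hc
  · obtain ⟨j, hj, hnu⟩ := nu_cover c i hic
    have h1 : NF c f / n^j % n = dgtF c f j :=
      digit_extract n j (n-1) _ (fun i _ => dgt_lt hn c f i) hj
    have h2 : NF c f' / n^j % n = dgtF c f' j :=
      digit_extract n j (n-1) _ (fun i _ => dgt_lt hn c f' i) hj
    have h3 : dgtF c f j = dgtF c f' j := by rw [← h1, ← h2, hN]
    rw [dgtF, dgtF, if_pos hj, if_pos hj, hnu] at h3
    exact Fin.ext h3

lemma pv_lt {u B v n : ℕ} (hu : u = (n+1)/2) (hv : v < n) : pvF u B v < u ^ B :=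
  digit_sum_lt u _ B (fun j _ => by omega)

lemma pv_digit {u B v n : ℕ} (hu : u = (n+1)/2) (hv : v < n) (hn : 1 ≤ n) :
    ∀ j, j < B → pvF u B v / u^j % u = v / 2 :=
  fun j hj => digit_extract u j B _ (fun i _ => by omega) hj

noncomputable def codeF {n : ℕ} (c : Fin n) (u B : ℕ) (f : Fin n → Fin n) : ℕ :=
  if (∀ x, f x = f c) then pvF u B (f c)
  else (if NF c f = pvF u B ((f c):ℕ) then NF c (fun _ => f c) else NF c f)

lemma code_lt {n : ℕ} (hn : 1 ≤ n) (c : Fin n) {u B : ℕ} (hu : u = (n+1)/2)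
    (hcap : n^(n-1) ≤ u^B) (f : Fin n → Fin n) : codeF c u B f < u ^ B := by
  rw [codeF]
  split_ifs with h1 h2
  · exact pv_lt hu (f c).isLt
  · exact lt_of_lt_of_le (NF_lt hn c _) hcap
  · exact lt_of_lt_of_le (NF_lt hn c _) hcap

lemma code_inj {n : ℕ} (hn : 1 ≤ n) (c : Fin n) {u B : ℕ}
    (f f' : Fin n → Fin n) (hc : f c = f' c) (hcode : codeF c u B f = codeF c u B f') :
    f = f' := by
  have hcc : f' c = f c := hc.symm
  rw [codeF, codeF, hcc] at hcode
  by_cases h1 : ∀ x, f x = f c <;> by_cases h2 : ∀ x, f' x = f c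
  · funext x; rw [h1 x, h2 x]
  · rw [if_pos h1, if_neg h2] at hcode
    exfalso
    split_ifs at hcode with h3
    · have hf' : f' = (fun _ => f c) := NF_inj hn c f' _ hcc (h3.trans hcode)
      exact h2 (fun x => by rw [hf'])
    · exact h3 hcode.symm
  · rw [if_neg h1, if_pos h2] at hcode
    exfalso
    split_ifs at hcode with h3
    · have hf : f = (fun _ => f c) := NF_inj hn c f _ rfl (h3.trans hcode.symm)
      exact h1 (fun x => by rw [hf])
    · exact h3 hcode
  · rw [if_neg h1, if_neg h2] at hcode
    split_ifs at hcode with h3 h4 h4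
    · exact NF_inj hn c f f' hc (h3.trans h4.symm)
    · exfalso
      have hf' : f' = (fun _ => f c) := NF_inj hn c f' _ hcc hcode.symm
      exact h2 (fun x => by rw [hf'])
    · exfalso
      have hf : f = (fun _ => f c) := NF_inj hn c f _ rfl hcode
      exact h1 (fun x => by rw [hf])
    · exact NF_inj hn c f f' hc hcode


noncomputable def phiF {n : ℕ} (hn : 16 ≤ n) (c : Fin n) (f : Fin n → Fin n)
    (z : Fin (2*n-2)) : Fin (2*n-2) :=
  if (z:ℕ) < (n+1)/2 then ⟨((f c):ℕ)/2, by have := (f c).isLt; omega⟩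
  else if (z:ℕ) < 2*n-4 then
    ⟨codeF c ((n+1)/2) (2*n-4-(n+1)/2) f / ((n+1)/2)^((z:ℕ)-(n+1)/2) % ((n+1)/2), by
      have h1 : 0 < (n+1)/2 := by omega
      have := Nat.mod_lt (codeF c ((n+1)/2) (2*n-4-(n+1)/2) f / ((n+1)/2)^((z:ℕ)-(n+1)/2)) h1
      omega⟩
  else ⟨2*n-4 + ((f c):ℕ) % 2, by omega⟩

lemma phiF_val {n : ℕ} (hn : 16 ≤ n) (c : Fin n) (f : Fin n → Fin n) (z : Fin (2*n-2)) :
    ((phiF hn c f z : Fin (2*n-2)) : ℕ) =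
    if (z:ℕ) < (n+1)/2 then ((f c):ℕ)/2
    else if (z:ℕ) < 2*n-4 then
      codeF c ((n+1)/2) (2*n-4-(n+1)/2) f / ((n+1)/2)^((z:ℕ)-(n+1)/2) % ((n+1)/2)
    else 2*n-4 + ((f c):ℕ) % 2 := by
  rw [phiF]
  split_ifs <;> rfl

lemma code_const {n : ℕ} (c : Fin n) (u B : ℕ) (w : Fin n) :
    codeF c u B (fun _ => w) = pvF u B (w:ℕ) := by
  rw [codeF, if_pos (fun x => rfl)]

lemma upper2 (n : ℕ) (hn : 16 ≤ n) (c : Fin n) :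
    ∃ φ : (Fin n → Fin n) → (Fin (2*n-2) → Fin (2*n-2)), Function.Injective φ ∧
      ∀ f g : Fin n → Fin n, φ (fun _ => g c) = tMul (φ f) (φ g) := by
  have hn1 : 1 ≤ n := by omega
  have hcapn : n^(n-1) ≤ ((n+1)/2)^(2*n-4-(n+1)/2) := cap_ineq n hn
  have hupos : 0 < (n+1)/2 := by omega
  have hu2n : (n+1)/2 < 2*n-4 := by omega
  refine ⟨phiF hn c, ?_, ?_⟩
  · -- injectivity
    intro f f' hff
    have hval : ∀ z : Fin (2*n-2), ((phiF hn c f z):ℕ) = ((phiF hn c f' z):ℕ) :=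
      fun z => congrArg Fin.val (congrFun hff z)
    have e1 : ((f c):ℕ)/2 = ((f' c):ℕ)/2 := by
      have h0 := hval ⟨0, by omega⟩
      rw [phiF_val, phiF_val] at h0
      rwa [if_pos (show ((⟨0, by omega⟩ : Fin (2*n-2)):ℕ) < (n+1)/2 from hupos),
           if_pos (show ((⟨0, by omega⟩ : Fin (2*n-2)):ℕ) < (n+1)/2 from hupos)] at h0
    have e2 : ((f c):ℕ) % 2 = ((f' c):ℕ) % 2 := by
      have h0 := hval ⟨2*n-4, by omega⟩
      rw [phiF_val, phiF_val] at h0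
      have hcond : ¬ ((⟨2*n-4, by omega⟩ : Fin (2*n-2)):ℕ) < (n+1)/2 := by
        show ¬ (2*n-4 < (n+1)/2); omega
      have hcond2 : ¬ ((⟨2*n-4, by omega⟩ : Fin (2*n-2)):ℕ) < 2*n-4 := by
        show ¬ (2*n-4 < 2*n-4); omega
      rw [if_neg hcond, if_neg hcond, if_neg hcond2, if_neg hcond2] at h0
      omega
    have hfc : f c = f' c := by apply Fin.ext; omega
    have e3 : codeF c ((n+1)/2) (2*n-4-(n+1)/2) f = codeF c ((n+1)/2) (2*n-4-(n+1)/2) f' := by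
      apply digits_det ((n+1)/2) (2*n-4-(n+1)/2) _ _
        (code_lt hn1 c rfl hcapn f) (code_lt hn1 c rfl hcapn f')
      intro j hj
      have h0 := hval ⟨(n+1)/2 + j, by omega⟩
      rw [phiF_val, phiF_val] at h0
      have hcond : ¬ ((⟨(n+1)/2 + j, by omega⟩ : Fin (2*n-2)):ℕ) < (n+1)/2 := by
        show ¬ ((n+1)/2 + j < (n+1)/2); omega
      have hcond2 : ((⟨(n+1)/2 + j, by omega⟩ : Fin (2*n-2)):ℕ) < 2*n-4 := by
        show (n+1)/2 + j < 2*n-4; omega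
      rw [if_neg hcond, if_neg hcond, if_pos hcond2, if_pos hcond2] at h0
      have hsub : ((⟨(n+1)/2 + j, by omega⟩ : Fin (2*n-2)):ℕ) - (n+1)/2 = j := by
        show (n+1)/2 + j - (n+1)/2 = j; omega
      rwa [hsub] at h0
    exact code_inj hn1 c f f' hfc e3
  · -- homomorphism
    intro f g
    funext z
    apply Fin.ext
    show ((phiF hn c (fun _ => g c) z):ℕ) = ((phiF hn c g (phiF hn c f z)):ℕ)
    rw [phiF_val, phiF_val, phiF_val hn c f z]
    by_cases hz1 : (z:ℕ) < (n+1)/2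
    · rw [if_pos hz1, if_pos hz1]
      rw [if_pos (show ((f c):ℕ)/2 < (n+1)/2 by have := (f c).isLt; omega)]
    · by_cases hz2 : (z:ℕ) < 2*n-4
      · rw [if_neg hz1, if_neg hz1, if_pos hz2, if_pos hz2]
        rw [if_pos (Nat.mod_lt _ hupos)]
        rw [code_const]
        exact pv_digit rfl (g c).isLt hn1 _ (by omega)
      · rw [if_neg hz1, if_neg hz1, if_neg hz2, if_neg hz2]
        rw [if_neg (show ¬ (2*n-4 + ((f c):ℕ) % 2 < (n+1)/2) by omega),
            if_neg (show ¬ (2*n-4 + ((f c):ℕ) % 2 < 2*n-4) by omega)]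




open Finset in
lemma no_small (n m : ℕ) (hn2 : 2 ≤ n) (hn15 : n ≤ 15) (c : Fin n)
    (hm1 : 1 ≤ m) (hm : m ≤ 2*n-2)
    (φ : (Fin n → Fin n) → (Fin m → Fin m)) (hinj : Function.Injective φ)
    (hhom : ∀ f g : Fin n → Fin n, φ (fun _ => g c) = tMul (φ f) (φ g)) : False := by
  classical
  have hnpos : 0 < n := by omega
  -- key pointwise identity
  have Hfg : ∀ (f g : Fin n → Fin n) (z : Fin m), φ g (φ f z) = φ (fun _ => g c) z := by
    intro f g z
    have := congrFun (hhom f g) z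
    exact this.symm
  set E : Fin n → Fin m → Fin m := fun v => φ (fun _ => v) with hE
  set κ : Fin m → (Fin n → Fin m) := fun z v => E v z with hκ
  have fact1 : ∀ (f : Fin n → Fin n) (z : Fin m), κ (φ f z) = κ z := by
    intro f z
    funext v
    show E v (φ f z) = E v z
    rw [hE]
    simp only []
    rw [Hfg f (fun _ => v) z]
  set R : Finset (Fin m) := Finset.univ.filter (fun z => ∃ f y, φ f y = z) with hR
  have memR : ∀ (f : Fin n → Fin n) (y : Fin m), φ f y ∈ R := by
    intro f y; rw [hR]; simp only [mem_filter, mem_univ, true_and]; exact ⟨f, y, rfl⟩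
  -- representative map
  set ρ : Fin m → Fin m := fun z => (Finset.univ.filter (fun y => κ y = κ z)).min'
      ⟨z, by simp⟩ with hρ
  have hρmem : ∀ z, ρ z ∈ Finset.univ.filter (fun y => κ y = κ z) := fun z =>
    Finset.min'_mem _ _
  have hρκ : ∀ z, κ (ρ z) = κ z := by
    intro z; have := hρmem z; simp only [mem_filter] at this; exact this.2
  have hρeq : ∀ y z, κ y = κ z → ρ y = ρ z := by
    intro y z h
    rw [hρ]
    simp only []
    congr 1
    apply Finset.filter_congr
    intro w _
    simp [h]
  set Cls : Finset (Fin m) := Finset.univ.image ρ with hCls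
  have hρCls : ∀ z, ρ z ∈ Cls := fun z => Finset.mem_image_of_mem ρ (mem_univ z)
  have hClsfix : ∀ b ∈ Cls, ρ b = b := by
    intro b hb
    rw [hCls] at hb
    obtain ⟨x, _, rfl⟩ := Finset.mem_image.mp hb
    exact hρeq _ _ (hρκ x)
  set u : Fin m → ℕ := fun z => (R.filter (fun w => κ w = κ z)).card with hu
  have hu1 : ∀ z, 1 ≤ u z := by
    intro z
    have h1 : φ (fun _ => c) z ∈ R.filter (fun w => κ w = κ z) := by
      rw [Finset.mem_filter]
      exact ⟨memR _ _, fact1 _ _⟩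
    have h2 := Finset.card_pos.mpr ⟨_, h1⟩
    simpa [hu] using h2
  have huκ : ∀ y z, κ y = κ z → u y = u z := by
    intro y z h; rw [hu]; simp only []; congr 1; apply Finset.filter_congr; intro w _; simp [h]
  -- Counting 1 : fibers inject into functions on the complement of R
  have hprod1 : n^(n-1) ≤ ∏ z : {z : Fin m // z ∉ R}, u (z : Fin m) := by
    have hF : n^(n-1) ≤ Fintype.card {f : Fin n → Fin n // f c = c} := by
      have hcard : Fintype.card ({i : Fin n // i ≠ c} → Fin n) = n^(n-1) := by
        rw [Fintype.card_fun, Fintype.card_fin]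
        congr 1
        have := Fintype.card_subtype_compl (fun i : Fin n => i = c)
        rw [Fintype.card_subtype_eq, Fintype.card_fin] at this
        exact this
      rw [← hcard]
      apply Fintype.card_le_of_injective
        (fun g => (⟨fun i => if h : i = c then c else g ⟨i, h⟩, by simp⟩ :
          {f : Fin n → Fin n // f c = c}))
      intro g g' hgg
      funext i
      have h5 := congrFun (congrArg Subtype.val hgg) i.1
      simp only [] at h5
      rw [dif_neg i.2, dif_neg i.2] at h5
      simpa using h5
    have hstep2 : Fintype.card {f : Fin n → Fin n // f c = c} ≤
        Fintype.card (∀ z : {z : Fin m // z ∉ R},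
          {w : Fin m // w ∈ R.filter (fun w => κ w = κ (z : Fin m))}) := by
      apply Fintype.card_le_of_injective
        (fun fh z => ⟨φ fh.1 z.1, Finset.mem_filter.mpr ⟨memR _ _, fact1 _ _⟩⟩)
      intro f f' h
      apply Subtype.ext
      apply hinj
      funext z
      by_cases hz : z ∈ R
      · rw [hR] at hz
        simp only [mem_filter, mem_univ, true_and] at hz
        obtain ⟨g, y, rfl⟩ := hz
        rw [Hfg g f.1 y, Hfg g f'.1 y, f.2, f'.2]
      · exact congrArg Subtype.val (congrFun h ⟨z, hz⟩)
    have hprodcard : Fintype.card (∀ z : {z : Fin m // z ∉ R},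
        {w : Fin m // w ∈ R.filter (fun w => κ w = κ (z : Fin m))})
        = ∏ z : {z : Fin m // z ∉ R}, u (z : Fin m) := by
      rw [Fintype.card_pi]
      apply Finset.prod_congr rfl
      intro z _
      rw [Fintype.card_coe]
    calc n^(n-1) ≤ Fintype.card {f : Fin n → Fin n // f c = c} := hF
      _ ≤ _ := hstep2
      _ = _ := hprodcard
  -- Counting 2 : constants inject into functions on Cls
  have hconsts : n ≤ ∏ b ∈ Cls, u b := by
    have h2 : Fintype.card (Fin n) ≤
        Fintype.card (∀ z : {z : Fin m // z ∈ Cls},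
          {w : Fin m // w ∈ R.filter (fun w => κ w = κ (z : Fin m))}) := by
      apply Fintype.card_le_of_injective
        (fun v z => ⟨E v z.1, Finset.mem_filter.mpr ⟨memR _ _, fact1 _ _⟩⟩)
      intro v v' h
      have hEE : E v = E v' := by
        funext z
        have h1 : E v z = E v (ρ z) := by
          show κ z v = κ (ρ z) v
          rw [hρκ]
        have h2 : E v' z = E v' (ρ z) := by
          show κ z v' = κ (ρ z) v'
          rw [hρκ]
        have h3 := congrArg Subtype.val (congrFun h ⟨ρ z, hρCls z⟩)
        simp only [] at h3
        rw [h1, h2, h3]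
      have := hinj hEE
      exact congrFun this c
    rw [Fintype.card_fin, Fintype.card_pi] at h2
    calc n ≤ ∏ z : {z : Fin m // z ∈ Cls},
          Fintype.card {w : Fin m // w ∈ R.filter (fun w => κ w = κ (z : Fin m))} := h2
      _ = ∏ z : {z : Fin m // z ∈ Cls}, u (z : Fin m) := by
          apply Finset.prod_congr rfl; intro z _; rw [Fintype.card_coe]
      _ = ∏ b ∈ Cls, u b := by rw [Finset.prod_coe_sort]
  -- |R| = sum of u over classes
  have hRsum : R.card = ∑ b ∈ Cls, u b := by
    rw [Finset.card_eq_sum_card_fiberwise (fun x _ => hρCls x)]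
    apply Finset.sum_congr rfl
    intro b hb
    congr 1
    apply Finset.filter_congr
    intro w _
    constructor
    · intro hw
      simp only [← hw]
      exact (hρκ w).symm
    · intro hw
      rw [hρeq w b hw, hClsfix b hb]
  -- maximum
  obtain ⟨z0⟩ : Nonempty (Fin m) := ⟨⟨0, by omega⟩⟩
  have hCne : Cls.Nonempty := ⟨ρ z0, hρCls z0⟩
  obtain ⟨zs, hzs, hmax⟩ := Finset.exists_max_image Cls u hCne
  set U : ℕ := u zs with hU
  set T : ℕ := (∑ b ∈ Cls, u b) - U with hT
  have hUle : U ≤ ∑ b ∈ Cls, u b := Finset.single_le_sum (f := u) (fun i _ => Nat.zero_le _) hzs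
  have hUT : U + T = ∑ b ∈ Cls, u b := by omega
  have hUz : ∀ z : Fin m, u z ≤ U := by
    intro z
    have h1 : u (ρ z) = u z := huκ (ρ z) z (hρκ z)
    rw [← h1]
    exact hmax (ρ z) (hρCls z)
  -- bound 1
  have hb1 : (∏ z : {z : Fin m // z ∉ R}, u (z : Fin m)) ≤ U ^ (m - R.card) := by
    have hcardc : Fintype.card {z : Fin m // z ∉ R} = m - R.card := by
      have := Fintype.card_subtype_compl (fun z : Fin m => z ∈ R)
      rw [Fintype.card_fin] at this
      rw [this]
      congr 1
      exact Fintype.card_coe R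
    calc (∏ z : {z : Fin m // z ∉ R}, u (z : Fin m))
        ≤ U ^ (Finset.univ : Finset {z : Fin m // z ∉ R}).card :=
          Finset.prod_le_pow_card _ _ _ (fun i _ => hUz _)
      _ = U ^ (m - R.card) := by rw [Finset.card_univ, hcardc]
  -- bound 2
  have hb2 : (∏ b ∈ Cls, u b) ≤ U * 2 ^ (T - 1) := by
    rw [← Finset.mul_prod_erase Cls u hzs, ← hU]
    apply Nat.mul_le_mul_left
    have hTsum : ∑ b ∈ Cls.erase zs, u b = T := by
      have := Finset.add_sum_erase Cls u hzs
      omega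
    rcases Finset.eq_empty_or_nonempty (Cls.erase zs) with he | he
    · rw [he, Finset.prod_empty]
      exact Nat.one_le_two_pow
    · have hk1 : 1 ≤ (Cls.erase zs).card := Finset.card_pos.mpr he
      calc ∏ b ∈ Cls.erase zs, u b
          ≤ ∏ b ∈ Cls.erase zs, 2 ^ (u b - 1) := by
            apply Finset.prod_le_prod'
            intro b _
            have h1 := Nat.lt_two_pow_self (n := u b - 1)
            have h2 := hu1 b
            omega
        _ = 2 ^ (∑ b ∈ Cls.erase zs, (u b - 1)) := Finset.prod_pow_eq_pow_sum _ _ _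
        _ ≤ 2 ^ (T - 1) := by
            apply Nat.pow_le_pow_right (by omega)
            have hsum : (∑ b ∈ Cls.erase zs, (u b - 1)) + (Cls.erase zs).card
                = ∑ b ∈ Cls.erase zs, u b := by
              rw [Finset.card_eq_sum_ones, ← Finset.sum_add_distrib]
              apply Finset.sum_congr rfl
              intro b _
              have := hu1 b
              omega
            omega
  have hb0 : R.card ≤ m := by
    have h := Finset.card_le_univ R
    simpa using h
  have hfin1 : n^(n-1) ≤ U ^ (2*n-2-U-T) := by
    have h1 : n^(n-1) ≤ U ^ (m - R.card) := le_trans hprod1 hb1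
    have h2 : m - R.card ≤ 2*n-2-U-T := by
      rw [Nat.sub_sub, hUT, ← hRsum]
      exact Nat.sub_le_sub_right hm _
    exact le_trans h1 (Nat.pow_le_pow_right (hu1 zs) h2)
  have hfin2 : n ≤ U * 2^(T-1) := le_trans hconsts hb2
  have hUR : U + T = R.card := by rw [hUT, hRsum]
  have hUle2n : U ≤ 2*n-2 := by omega
  have hkey := keyArith n hn2 hn15 U T (hu1 zs) hUle2n hfin2
  omega


/-- For a rank-`1` sandwich element `a ∈ T_n`: if `1 ≤ n ≤ 15` then the degree of the
variant `T_n^a` equals `2n - 1`, and if `n ≥ 16` then it is at most `2n - 2`. -/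
theorem variant_degree_rank_one_bounds (n : ℕ) (a : Fin n → Fin n) (ha : trank a = 1) :
    (1 ≤ n → n ≤ 15 → variantDegree n a = 2 * n - 1) ∧
    (16 ≤ n → variantDegree n a ≤ 2 * n - 2) := by
  obtain ⟨c, hc⟩ : ∃ c : Fin n, ∀ x, a x = c := by
    rw [trank] at ha
    obtain ⟨c, hc⟩ := Finset.card_eq_one.mp ha
    refine ⟨c, fun x => ?_⟩
    have hx : a x ∈ Finset.univ.image a := Finset.mem_image_of_mem a (Finset.mem_univ x)
    rw [hc, Finset.mem_singleton] at hx
    exact hx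
  constructor
  · intro hn1 hn15
    obtain ⟨φ, hφinj, hφhom⟩ := upper1 n hn1 c
    have hmem : (2*n-1) ∈ {m | 1 ≤ m ∧
        ∃ φ : (Fin n → Fin n) → (Fin m → Fin m), Function.Injective φ ∧
        ∀ f g : Fin n → Fin n, φ (fun x => g (a (f x))) = tMul (φ f) (φ g)} := by
      refine ⟨by omega, φ, hφinj, fun f g => ?_⟩
      have hrw : (fun x => g (a (f x))) = (fun _ => g c) := by funext x; rw [hc]
      rw [hrw]
      exact hφhom f g
    have hlow : ∀ m' ∈ {m | 1 ≤ m ∧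
        ∃ φ : (Fin n → Fin n) → (Fin m → Fin m), Function.Injective φ ∧
        ∀ f g : Fin n → Fin n, φ (fun x => g (a (f x))) = tMul (φ f) (φ g)},
        2*n-1 ≤ m' := by
      rintro m' ⟨hm'1, ψ, hψinj, hψhom⟩
      by_contra hlt
      push_neg at hlt
      rcases Nat.lt_or_ge n 2 with h2 | h2
      · omega
      · refine no_small n m' h2 hn15 c hm'1 (by omega) ψ hψinj (fun f g => ?_)
        have hrw : (fun x => g (a (f x))) = (fun _ => g c) := by funext x; rw [hc]
        rw [← hrw]
        exact hψhom f g
    rw [variantDegree]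
    apply le_antisymm
    · exact Nat.sInf_le hmem
    · exact hlow _ (Nat.sInf_mem ⟨_, hmem⟩)
  · intro hn16
    obtain ⟨φ, hφinj, hφhom⟩ := upper2 n hn16 c
    rw [variantDegree]
    apply Nat.sInf_le
    refine ⟨by omega, φ, hφinj, fun f g => ?_⟩
    have hrw : (fun x => g (a (f x))) = (fun _ => g c) := by funext x; rw [hc]
    rw [hrw]
    exact hφhom f g
end

section
/- For every n ≥ 1, if a ∈ T_n and b ∈ T_{n+1} both have rank 1, then the minimum transformation degree of the variant T_n^a is strictly less than the minimum transformation degree of the variant T_{n+1}^b. In other words, writing μ(n) for the degree of T_n^a with rank(a) = 1, the sequence μ(1) < μ(2) < μ(3) < ⋯ is strictly increasing. -/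
section Aux

set_option linter.unusedVariables false
set_option linter.unnecessarySeqFocus false

lemma rank_one {n : ℕ} {a : Fin n → Fin n} (ha : trank a = 1) :
    ∃ c, ∀ x, a x = c := by
  obtain ⟨c, hc⟩ := Finset.card_eq_one.mp ha
  refine ⟨c, fun x => ?_⟩
  have : a x ∈ Finset.univ.image a := Finset.mem_image_of_mem a (Finset.mem_univ x)
  rw [hc] at this
  exact Finset.mem_singleton.mp this

def Cond (n m : ℕ) : Prop :=
  ∃ (r : ℕ) (d t : Fin r → ℕ), (∀ j, 1 ≤ d j) ∧ (∑ j, (d j + t j)) ≤ m ∧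
    n ≤ ∏ j, d j ∧ n ^ (n - 1) ≤ ∏ j, (d j) ^ (t j)

lemma cond_mono {n m m' : ℕ} (h : Cond n m) (hm : m ≤ m') : Cond n m' := by
  obtain ⟨r, d, t, h1, h2, h3, h4⟩ := h
  exact ⟨r, d, t, h1, h2.trans hm, h3, h4⟩

lemma cond_canonical {n : ℕ} (hn : 1 ≤ n) : Cond n (2 * n - 1) := by
  refine ⟨1, fun _ => n, fun _ => n - 1, fun _ => hn, ?_, ?_, ?_⟩ <;> simp <;> omega

lemma bernoulli_nat (n a : ℕ) : a ^ n + n * a ^ (n - 1) ≤ (a + 1) ^ n := by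
  induction n with
  | zero => simp
  | succ k ih =>
    rcases Nat.eq_zero_or_pos k with hk | hk
    · subst hk; simp
    · have h1 : (a + 1) ^ (k + 1) = (a + 1) ^ k * (a + 1) := by ring
      have h2 : (a ^ k + k * a ^ (k - 1)) * (a + 1) ≤ (a + 1) ^ k * (a + 1) :=
        Nat.mul_le_mul_right _ ih
      refine le_trans ?_ (h1 ▸ h2)
      have hak : a ^ (k - 1) * a = a ^ k := by
        rw [← pow_succ]; congr 1; omega
      have : (a ^ k + k * a ^ (k - 1)) * (a + 1)
          = a ^ (k+1) + k * (a ^ (k-1) * a) + a ^ k + k * a ^ (k-1) := by ring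
      rw [this, hak]
      have : a ^ (k + 1) + (k + 1) * a ^ (k + 1 - 1) = a ^ (k+1) + k * a ^ k + a ^ k := by
        simp; ring
      rw [this]
      omega

lemma two_pow_le {n : ℕ} (hn : 1 ≤ n) : 2 * n ^ n ≤ (n + 1) ^ n := by
  have := bernoulli_nat n n
  have h : n * n ^ (n - 1) = n ^ n := by
    nth_rewrite 1 [← pow_one n]
    rw [← pow_add]; congr 1; omega
  omega

lemma cond_step {n m : ℕ} (hn : 1 ≤ n) (h : Cond (n + 1) m) : Cond n (m - 1) := by
  obtain ⟨r, d, t, h1, h2, h3, h4⟩ := h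
  simp only [Nat.add_sub_cancel] at h4
  obtain ⟨n', rfl⟩ : ∃ n', n = n' + 1 := ⟨n - 1, by omega⟩
  set n := n' + 1 with hndef
  have h2' : (2 : ℕ) ≤ (n+1)^n := by
    calc (2:ℕ) ≤ n + 1 := by omega
    _ = (n+1)^1 := (pow_one _).symm
    _ ≤ (n+1)^n := Nat.pow_le_pow_right (by omega) (by omega)
  have hex : ∃ j, 2 ≤ d j ^ t j := by
    by_contra hcon
    push_neg at hcon
    have : ∏ j, d j ^ t j ≤ 1 := Finset.prod_le_one (fun _ _ => Nat.zero_le _)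
      (fun j _ => by have := hcon j; omega)
    omega
  obtain ⟨j0, hj0⟩ := hex
  have htj0 : 1 ≤ t j0 := by
    by_contra hcon
    have : t j0 = 0 := by omega
    rw [this, pow_zero] at hj0; omega
  have hdj0 : 2 ≤ d j0 := by
    by_contra hcon
    have : d j0 ^ t j0 ≤ 1 ^ t j0 := Nat.pow_le_pow_left (by omega) _
    rw [one_pow] at this; omega
  by_cases hsize : d j0 ≤ 2 * n
  · -- decrement t at j0
    set t' := Function.update t j0 (t j0 - 1) with ht'
    refine ⟨r, d, t', h1, ?_, by calc n ≤ n+1 := by omega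
      _ ≤ ∏ j, d j := h3, ?_⟩
    · have e1 : ∑ j, (d j + t' j)
          = (d j0 + t' j0) + ∑ j ∈ Finset.univ.erase j0, (d j + t' j) :=
        (Finset.add_sum_erase _ (fun j => d j + t' j) (Finset.mem_univ j0)).symm
      have e2 : ∑ j, (d j + t j)
          = (d j0 + t j0) + ∑ j ∈ Finset.univ.erase j0, (d j + t j) :=
        (Finset.add_sum_erase _ (fun j => d j + t j) (Finset.mem_univ j0)).symm
      have e3 : ∑ j ∈ Finset.univ.erase j0, (d j + t' j)
          = ∑ j ∈ Finset.univ.erase j0, (d j + t j) := by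
        apply Finset.sum_congr rfl
        intro x hx
        rw [ht', Function.update_of_ne (Finset.ne_of_mem_erase hx)]
      have e4 : t' j0 = t j0 - 1 := by rw [ht', Function.update_self]
      omega
    · have e1 : ∏ j, d j ^ t' j
          = d j0 ^ (t j0 - 1) * ∏ j ∈ Finset.univ.erase j0, d j ^ t j := by
        rw [← Finset.mul_prod_erase _ (fun j => d j ^ t' j) (Finset.mem_univ j0)]
        rw [ht', Function.update_self]
        congr 1
        apply Finset.prod_congr rfl
        intro x hx
        rw [Function.update_of_ne (Finset.ne_of_mem_erase hx)]
      have e2 : ∏ j, d j ^ t j = d j0 * ∏ j, d j ^ t' j := by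
        rw [e1, ← Finset.mul_prod_erase _ (fun j => d j ^ t j) (Finset.mem_univ j0),
          ← mul_assoc]
        congr 1
        obtain ⟨s, hs⟩ : ∃ s, t j0 = s + 1 := ⟨t j0 - 1, by omega⟩
        rw [hs]
        simp [pow_succ]
        ring
      have key : d j0 * (n ^ (n-1)) ≤ d j0 * ∏ j, d j ^ t' j := by
        rw [← e2]
        calc d j0 * n ^ (n-1) ≤ 2*n * n^(n-1) := Nat.mul_le_mul_right _ hsize
          _ = 2 * n^n := by
            rw [mul_assoc]
            congr 1
            simp only [hndef, Nat.add_sub_cancel]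
            rw [← pow_succ']
          _ ≤ (n+1)^n := two_pow_le (by omega)
          _ ≤ ∏ j, d j ^ t j := h4
      exact Nat.le_of_mul_le_mul_left key (by omega)
  · -- big class: m ≥ 2n + 2
    have : d j0 + t j0 ≤ ∑ j, (d j + t j) :=
      Finset.single_le_sum (f := fun j => d j + t j) (fun _ _ => Nat.zero_le _)
        (Finset.mem_univ j0)
    exact cond_mono (cond_canonical (by omega)) (by omega)

/-- Membership predicate of the defining set of `variantDegree`. -/
def DegSet (n : ℕ) (a : Fin n → Fin n) (m : ℕ) : Prop :=
  1 ≤ m ∧ ∃ φ : (Fin n → Fin n) → (Fin m → Fin m), Function.Injective φ ∧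
      ∀ f g : Fin n → Fin n, φ (fun x => g (a (f x))) = tMul (φ f) (φ g)

/-- Transport an embedding defined on an abstract finite carrier `X` into `Fin m`. -/
lemma degset_of_carrier {n m : ℕ} (a : Fin n → Fin n) (X : Type) [Fintype X] [Nonempty X]
    (hcard : Fintype.card X ≤ m)
    (Ψ : (Fin n → Fin n) → X → X) (hinj : Function.Injective Ψ)
    (hhom : ∀ f g : Fin n → Fin n, Ψ (fun x => g (a (f x))) = fun z => Ψ g (Ψ f z)) :
    DegSet n a m := by
  have hm : 1 ≤ m := le_trans Fintype.card_pos hcard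
  have hemb : Nonempty (X ↪ Fin m) := by
    apply Function.Embedding.nonempty_of_card_le
    simpa using hcard
  obtain ⟨ι⟩ := hemb
  classical
  set bar : Fin m → X := fun y => if h : ∃ x, ι x = y then h.choose else Classical.arbitrary X
    with hbar
  have hbar_ι : ∀ x, bar (ι x) = x := by
    intro x
    have hex : ∃ x', ι x' = ι x := ⟨x, rfl⟩
    rw [hbar]
    simp only [dif_pos hex]
    exact ι.injective hex.choose_spec
  refine ⟨hm, fun g => fun y => ι (Ψ g (bar y)), ?_, ?_⟩
  · intro f f' hff'
    apply hinj
    funext x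
    have := congrFun hff' (ι x)
    simp only [hbar_ι] at this
    exact ι.injective this
  · intro f g
    funext y
    show ι (Ψ (fun x => g (a (f x))) (bar y)) = ι (Ψ g (bar (ι (Ψ f (bar y)))))
    rw [hhom f g, hbar_ι]

lemma cond_suff {n m : ℕ} (hn : 2 ≤ n) {a : Fin n → Fin n} {c : Fin n}
    (ha : ∀ x, a x = c) (h : Cond n m) : DegSet n a m := by
  classical
  obtain ⟨r, d, t, h1, h2, h3, h4⟩ := h
  -- the carrier
  set X := Σ j : Fin r, (Fin (d j) ⊕ Fin (t j)) with hX
  have hcardX : Fintype.card X = ∑ j, (d j + t j) := by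
    simp [hX]
  -- nonemptiness
  have hj1 : ∃ j, 2 ≤ d j := by
    by_contra hcon
    push_neg at hcon
    have : ∏ j, d j ≤ 1 := Finset.prod_le_one (fun _ _ => Nat.zero_le _)
      (fun j _ => by have := hcon j; omega)
    omega
  obtain ⟨j1, hj1⟩ := hj1
  have hne : Nonempty X := ⟨⟨j1, Sum.inl ⟨0, by omega⟩⟩⟩
  -- the data embeddings
  have hτ : Nonempty (Fin n ↪ (Π j, Fin (d j))) := by
    apply Function.Embedding.nonempty_of_card_le
    simpa [Fintype.card_pi] using h3
  obtain ⟨τ⟩ := hτ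
  have hcardR : Fintype.card ({x : Fin n // x ≠ c} → Fin n) = n ^ (n - 1) := by
    simp [Fintype.card_fun, Fintype.card_subtype_compl]
  have hρ : Nonempty (({x : Fin n // x ≠ c} → Fin n) ↪ (Π j, Fin (t j) → Fin (d j))) := by
    apply Function.Embedding.nonempty_of_card_le
    rw [hcardR]
    simpa [Fintype.card_pi, Fintype.card_fun] using h4
  obtain ⟨ρ₀⟩ := hρ
  set res : (Fin n → Fin n) → ({x : Fin n // x ≠ c} → Fin n) := fun g x => g x.1 with hres
  set w : Fin n → (Π j, Fin (t j) → Fin (d j)) := fun i j _ => τ i j with hw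
  set ρ : Fin n → ({x : Fin n // x ≠ c} → Fin n) → (Π j, Fin (t j) → Fin (d j)) :=
    fun i => (Equiv.swap (ρ₀ (res (fun _ => i))) (w i)) ∘ ρ₀ with hρdef
  have ρinj : ∀ i, Function.Injective (ρ i) := fun i =>
    (Equiv.injective _).comp ρ₀.injective
  have ρconst : ∀ i, ρ i (res (fun _ => i)) = w i := by
    intro i
    rw [hρdef]
    simp only [Function.comp_apply]
    exact Equiv.swap_apply_left _ _
  -- the embedding
  set Ψ : (Fin n → Fin n) → X → X := fun g x =>
    ⟨x.1, Sum.inl (match x.2 with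
      | Sum.inl _ => τ (g c) x.1
      | Sum.inr q => ρ (g c) (res g) x.1 q)⟩ with hΨ
  have hΨinl : ∀ g j p, Ψ g ⟨j, Sum.inl p⟩ = ⟨j, Sum.inl (τ (g c) j)⟩ := fun _ _ _ => rfl
  have hΨinr : ∀ g j q, Ψ g ⟨j, Sum.inr q⟩ = ⟨j, Sum.inl (ρ (g c) (res g) j q)⟩ :=
    fun _ _ _ => rfl
  apply degset_of_carrier a X (by omega) Ψ
  · -- injectivity
    intro g g' hgg'
    have hc : g c = g' c := by
      apply τ.injective
      funext j
      have := congrFun hgg' ⟨j, Sum.inl ⟨0, h1 j⟩⟩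
      rw [hΨinl, hΨinl] at this
      have := (Sigma.mk.inj_iff.mp this).2
      simpa using this
    have hr : res g = res g' := by
      apply ρinj (g c)
      funext j q
      have := congrFun hgg' ⟨j, Sum.inr q⟩
      rw [hΨinr, hΨinr, ← hc] at this
      have := (Sigma.mk.inj_iff.mp this).2
      simpa using this
    funext x
    by_cases hx : x = c
    · rw [hx]; exact hc
    · exact congrFun hr ⟨x, hx⟩
  · -- homomorphism
    intro f g
    have hfg : (fun x => g (a (f x))) = fun _ => g c := funext fun x => by rw [ha]
    rw [hfg]
    funext x
    obtain ⟨j, p | q⟩ := x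
    · rfl
    · rw [hΨinr (fun _ => g c) j q]
      show (⟨j, Sum.inl (ρ (g c) (res fun _ => g c) j q)⟩ : X) = ⟨j, Sum.inl (τ (g c) j)⟩
      rw [ρconst]

lemma cond_nec {n m : ℕ} (hn : 1 ≤ n) {a : Fin n → Fin n} {c : Fin n}
    (ha : ∀ x, a x = c) (h : DegSet n a m) : Cond n m := by
  classical
  obtain ⟨hm, φ, hinj, hhom⟩ := h
  -- basic consequences of the homomorphism property
  have key : ∀ f g : Fin n → Fin n, φ (fun _ => g c) = fun z => φ g (φ f z) := by
    intro f g
    have := hhom f g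
    have e : (fun x => g (a (f x))) = fun _ => g c := funext fun x => by rw [ha]
    rw [e] at this
    exact this
  set E : Fin n → Fin m → Fin m := fun i => φ (fun _ => i) with hE
  have F2 : ∀ (i : Fin n) (f : Fin n → Fin n) (z : Fin m), E i (φ f z) = E i z := by
    intro i f z
    have := key f (fun _ => i)
    exact (congrFun this z).symm
  set D : Finset (Fin m) :=
    Finset.univ.biUnion (fun f : Fin n → Fin n => Finset.univ.image (φ f)) with hDdef
  have hD : ∀ (f : Fin n → Fin n) (z : Fin m), φ f z ∈ D := by
    intro f z
    rw [hDdef]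
    exact Finset.mem_biUnion.mpr ⟨f, Finset.mem_univ f,
      Finset.mem_image_of_mem (φ f) (Finset.mem_univ z)⟩
  have hDmem : ∀ z ∈ D, ∃ f y, φ f y = z := by
    intro z hz
    rw [hDdef] at hz
    obtain ⟨f, -, hf⟩ := Finset.mem_biUnion.mp hz
    obtain ⟨y, -, hy⟩ := Finset.mem_image.mp hf
    exact ⟨f, y, hy⟩
  set Eh : Fin m → (Fin n → Fin m) := fun z i => E i z with hEh
  have G1 : ∀ (f : Fin n → Fin n) (z : Fin m), Eh (φ f z) = Eh z := by
    intro f z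
    funext i
    exact F2 i f z
  set K : Finset (Fin n → Fin m) := Finset.image Eh Finset.univ with hK
  set dd : ↥K → ℕ := fun k => (Finset.univ.filter (fun z => Eh z = k.1 ∧ z ∈ D)).card with hdd
  set tt : ↥K → ℕ := fun k => (Finset.univ.filter (fun z => Eh z = k.1 ∧ z ∉ D)).card with htt
  -- each class meets D
  have hd1 : ∀ k : ↥K, 1 ≤ dd k := by
    intro k
    obtain ⟨z, -, hz⟩ := Finset.mem_image.mp k.2
    have hmem : E c z ∈ Finset.univ.filter (fun z' => Eh z' = k.1 ∧ z' ∈ D) := by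
      refine Finset.mem_filter.mpr ⟨Finset.mem_univ _, ?_, hD _ _⟩
      rw [show E c z = φ (fun _ => c) z from rfl, G1, hz]
    exact Finset.card_pos.mpr ⟨E c z, hmem⟩
  -- total size
  have hsum : ∑ k : ↥K, (dd k + tt k) = m := by
    have e1 : ∀ k : ↥K, dd k + tt k = (Finset.univ.filter (fun z => Eh z = k.1)).card := by
      intro k
      have l1 : Finset.univ.filter (fun z => Eh z = k.1 ∧ z ∈ D)
          = (Finset.univ.filter (fun z => Eh z = k.1)).filter (fun z => z ∈ D) := by
        rw [Finset.filter_filter]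
      have l2 : Finset.univ.filter (fun z => Eh z = k.1 ∧ z ∉ D)
          = (Finset.univ.filter (fun z => Eh z = k.1)).filter (fun z => ¬ (z ∈ D)) := by
        rw [Finset.filter_filter]
      show (Finset.univ.filter (fun z => Eh z = k.1 ∧ z ∈ D)).card
          + (Finset.univ.filter (fun z => Eh z = k.1 ∧ z ∉ D)).card = _
      rw [l1, l2]
      exact Finset.card_filter_add_card_filter_not _
    rw [Finset.sum_congr rfl (fun k _ => e1 k)]
    have := Finset.card_eq_sum_card_fiberwise
      (f := Eh) (s := Finset.univ) (t := K)
      (fun x _ => Finset.mem_image_of_mem Eh (Finset.mem_univ x))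
    rw [Finset.sum_coe_sort K (fun k => (Finset.univ.filter (fun z => Eh z = k)).card)]
    simpa using this.symm
  have rep : ∀ k : ↥K, ∃ z, Eh z = k.1 := by
    intro k
    obtain ⟨z, -, hz⟩ := Finset.mem_image.mp k.2
    exact ⟨z, hz⟩
  -- distinct transversals: n ≤ ∏ dd
  have hprod1 : n ≤ ∏ k : ↥K, dd k := by
    set Fn : ∀ (i : Fin n) (k : ↥K), {z : Fin m // Eh z = k.1 ∧ z ∈ D} := fun i k =>
      ⟨φ (fun _ => i) (rep k).choose, by rw [G1, (rep k).choose_spec], hD _ _⟩ with hFn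
    have hFninj : Function.Injective (fun i => (fun k => Fn i k)) := by
      intro i i' hii'
      by_contra hne
      have hconst : (fun _ : Fin n => i) ≠ (fun _ : Fin n => i') := by
        intro hcon
        exact hne (congrFun hcon c)
      have hEne : E i ≠ E i' := fun hcon => hconst (hinj hcon)
      obtain ⟨z0, hz0⟩ := Function.ne_iff.mp hEne
      have hk : Eh z0 ∈ K := Finset.mem_image_of_mem Eh (Finset.mem_univ z0)
      set k : ↥K := ⟨Eh z0, hk⟩ with hkdef
      have hval : ∀ i'' : Fin n, E i'' (rep k).choose = E i'' z0 := by
        intro i''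
        have := (rep k).choose_spec
        have := congrFun this i''
        exact this
      have h0 : Fn i = Fn i' := hii'
      have h3 : E i (rep k).choose = E i' (rep k).choose := by
        have h2 : (Fn i k).1 = (Fn i' k).1 := by rw [h0]
        exact h2
      rw [hval i, hval i'] at h3
      exact hz0 h3
    have hcard := Fintype.card_le_of_injective _ hFninj
    calc n = Fintype.card (Fin n) := (Fintype.card_fin n).symm
      _ ≤ Fintype.card (Π k : ↥K, {z : Fin m // Eh z = k.1 ∧ z ∈ D}) := hcard
      _ = ∏ k : ↥K, dd k := by
          rw [Fintype.card_pi]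
          exact Finset.prod_congr rfl (fun k _ => by rw [Fintype.card_subtype, hdd])
  -- counting: n^(n-1) ≤ ∏ dd ^ tt
  have hprod2 : n ^ (n - 1) ≤ ∏ k : ↥K, dd k ^ tt k := by
    set gOf : ({x : Fin n // x ≠ c} → Fin n) → (Fin n → Fin n) := fun u x =>
      if h : x = c then c else u ⟨x, h⟩ with hgOf
    have hgc : ∀ u, gOf u c = c := fun u => dif_pos rfl
    set Gn : ∀ (u : {x : Fin n // x ≠ c} → Fin n) (k : ↥K),
        ({z : Fin m // Eh z = k.1 ∧ z ∉ D} → {z : Fin m // Eh z = k.1 ∧ z ∈ D}) :=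
      fun u k zp => ⟨φ (gOf u) zp.1, by rw [G1]; exact zp.2.1, hD _ _⟩ with hGn
    have hGninj : Function.Injective (fun u => (fun k => Gn u k)) := by
      intro u u' huu'
      by_contra hne
      have hgne : gOf u ≠ gOf u' := by
        intro hcon
        apply hne
        funext x
        have := congrFun hcon x.1
        rw [hgOf] at this
        simp only [dif_neg x.2] at this
        exact this
      have hφne : φ (gOf u) ≠ φ (gOf u') := fun hcon => hgne (hinj hcon)
      obtain ⟨z0, hz0⟩ := Function.ne_iff.mp hφne
      have hz0D : z0 ∉ D := by
        intro hz0D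
        obtain ⟨f, y, hfy⟩ := hDmem z0 hz0D
        apply hz0
        rw [← hfy]
        have e1 := congrFun (key f (gOf u)) y
        have e2 := congrFun (key f (gOf u')) y
        rw [hgc] at e1
        rw [hgc] at e2
        rw [← e1, ← e2]
      have hk : Eh z0 ∈ K := Finset.mem_image_of_mem Eh (Finset.mem_univ z0)
      set k : ↥K := ⟨Eh z0, hk⟩ with hkdef
      have h0 : Gn u = Gn u' := huu'
      have h2 : (Gn u k ⟨z0, rfl, hz0D⟩).1 = (Gn u' k ⟨z0, rfl, hz0D⟩).1 := by rw [h0]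
      exact hz0 h2
    have hcard := Fintype.card_le_of_injective _ hGninj
    have hcardR : Fintype.card ({x : Fin n // x ≠ c} → Fin n) = n ^ (n - 1) := by
      simp [Fintype.card_fun, Fintype.card_subtype_compl]
    calc n ^ (n - 1) = Fintype.card ({x : Fin n // x ≠ c} → Fin n) := hcardR.symm
      _ ≤ _ := hcard
      _ = ∏ k : ↥K, dd k ^ tt k := by
          rw [Fintype.card_pi]
          refine Finset.prod_congr rfl (fun k _ => ?_)
          rw [Fintype.card_fun, Fintype.card_subtype, Fintype.card_subtype, hdd, htt]
  -- repackage over `Fin r`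
  set r := Fintype.card ↥K with hr
  obtain ⟨e⟩ : Nonempty (↥K ≃ Fin r) := ⟨Fintype.equivFin ↥K⟩
  refine ⟨r, dd ∘ e.symm, tt ∘ e.symm, fun j => hd1 _, ?_, ?_, ?_⟩
  · rw [← Equiv.sum_comp e.symm (fun k => dd k + tt k)] at hsum
    exact le_of_eq hsum
  · rw [← Equiv.prod_comp e.symm dd] at hprod1
    exact hprod1
  · rw [← Equiv.prod_comp e.symm (fun k => dd k ^ tt k)] at hprod2
    exact hprod2

lemma cond_ge_two {n m : ℕ} (hn : 2 ≤ n) (h : Cond n m) : 2 ≤ m := by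
  obtain ⟨r, d, t, h1, h2, h3, h4⟩ := h
  have hex : ∃ j, 2 ≤ d j := by
    by_contra hcon
    push_neg at hcon
    have : ∏ j, d j ≤ 1 := Finset.prod_le_one (fun _ _ => Nat.zero_le _)
      (fun j _ => by have := hcon j; omega)
    omega
  obtain ⟨j0, hj0⟩ := hex
  have : d j0 + t j0 ≤ ∑ j, (d j + t j) :=
    Finset.single_le_sum (f := fun j => d j + t j) (fun _ _ => Nat.zero_le _)
      (Finset.mem_univ j0)
  omega

end Aux

/-- The degrees of the rank-`1` variants of the full transformation semigroups are
strictly increasing: `μ(1) < μ(2) < μ(3) < ⋯`. -/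
theorem variant_degree_strict_mono (n : ℕ) (hn : 1 ≤ n)
    (a : Fin n → Fin n) (b : Fin (n + 1) → Fin (n + 1))
    (ha : trank a = 1) (hb : trank b = 1) :
    variantDegree n a < variantDegree (n + 1) b := by
  obtain ⟨ca, hca⟩ := rank_one ha
  obtain ⟨cb, hcb⟩ := rank_one hb
  have hSb : variantDegree (n + 1) b = sInf {m | DegSet (n + 1) b m} := rfl
  have hSa : variantDegree n a = sInf {m | DegSet n a m} := rfl
  have hne : (2 * (n + 1) - 1) ∈ {m | DegSet (n + 1) b m} :=
    cond_suff (by omega) hcb (cond_canonical (by omega))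
  have hM : DegSet (n + 1) b (sInf {m | DegSet (n + 1) b m}) :=
    Nat.sInf_mem ⟨2 * (n + 1) - 1, hne⟩
  have hCM : Cond (n + 1) (sInf {m | DegSet (n + 1) b m}) := cond_nec (by omega) hcb hM
  have hM2 : 2 ≤ sInf {m | DegSet (n + 1) b m} := cond_ge_two (by omega) hCM
  rw [hSa, hSb]
  rcases Nat.lt_or_ge n 2 with hn2 | hn2
  · -- n = 1
    have hn1 : n = 1 := by omega
    subst hn1
    have h1 : DegSet 1 a 1 := by
      refine ⟨le_refl 1, id, fun f g h => h, fun f g => ?_⟩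
      funext x
      exact Subsingleton.elim _ _
    have : sInf {m | DegSet 1 a m} ≤ 1 := Nat.sInf_le h1
    omega
  · -- n ≥ 2
    have hCn : Cond n (sInf {m | DegSet (n + 1) b m} - 1) := cond_step (by omega) hCM
    have hmem : DegSet n a (sInf {m | DegSet (n + 1) b m} - 1) := cond_suff hn2 hca hCn
    have : sInf {m | DegSet n a m} ≤ sInf {m | DegSet (n + 1) b m} - 1 := Nat.sInf_le hmem
    omega
end

section
/- For every real number x with 1 < x < 2 there exists a natural number N such that for all n > N and every a ∈ T_n of rank 1, the minimum transformation degree of the variant T_n^a is at most x·n. Moreover, for every integer k ≥ 2 and every integer n ≥ ⌈k·ln k⌉ + 1, and every a ∈ T_n of rank 1, the minimum transformation degree of T_n^a is at least n + k. (In particular, μ(n)/n → 1 and μ(n) − n → ∞ as n → ∞, where μ(n) denotes the degree of T_n^a with rank(a) = 1.) -/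
section Aux

/-- Restriction of a transformation to the complement of `c0`. -/
def restrT {n : ℕ} (c0 : Fin n) (g : Fin n → Fin n) : {x : Fin n // x ≠ c0} → Fin n :=
  fun x => g x.1

/-- Extension of a partial map by value `j` at `c0`. -/
def extT {n : ℕ} (c0 : Fin n) (j : Fin n) (h : {x : Fin n // x ≠ c0} → Fin n) :
    Fin n → Fin n :=
  fun x => if hx : x = c0 then j else h ⟨x, hx⟩

lemma extT_c0 {n : ℕ} (c0 j : Fin n) (h : {x : Fin n // x ≠ c0} → Fin n) :
    extT c0 j h c0 = j := dif_pos rfl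

lemma restrT_extT {n : ℕ} (c0 j : Fin n) (h : {x : Fin n // x ≠ c0} → Fin n) :
    restrT c0 (extT c0 j h) = h := by
  funext x
  exact dif_neg x.2

lemma eq_of_parts {n : ℕ} (c0 : Fin n) {g g' : Fin n → Fin n} (h0 : g c0 = g' c0)
    (h1 : restrT c0 g = restrT c0 g') : g = g' := by
  funext x
  by_cases hx : x = c0
  · subst hx; exact h0
  · exact congrFun h1 ⟨x, hx⟩

lemma card_restr {n : ℕ} (c0 : Fin n) :
    Fintype.card ({x : Fin n // x ≠ c0} → Fin n) = n ^ (n - 1) := by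
  rw [Fintype.card_fun, Fintype.card_fin]
  congr 1
  have h := Fintype.card_subtype_compl (fun x : Fin n => x = c0)
  rw [Fintype.card_subtype_eq, Fintype.card_fin] at h
  exact h

lemma rank_one_const {n : ℕ} {a : Fin n → Fin n} (ha : trank a = 1) :
    ∃ c0, ∀ x, a x = c0 := by
  obtain ⟨i, hi⟩ := Finset.card_eq_one.mp (show (Finset.univ.image a).card = 1 from ha)
  refine ⟨i, fun x => ?_⟩
  have h := Finset.mem_image_of_mem a (Finset.mem_univ x)
  rw [hi, Finset.mem_singleton] at h
  exact h

/-- The building block of the embedding. -/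
def Phi0 {n u s c : ℕ} (ι : Fin n ↪ Fin u × Fin s) (enc : (Fin n → Fin n) → Fin c → Fin u)
    (c0 : Fin n) (g : Fin n → Fin n) : ((Fin u ⊕ Fin s) ⊕ Fin c) → ((Fin u ⊕ Fin s) ⊕ Fin c) :=
  Sum.elim
    (Sum.elim (fun _ => Sum.inl (Sum.inl (ι (g c0)).1)) (fun _ => Sum.inl (Sum.inr (ι (g c0)).2)))
    (fun z => Sum.inl (Sum.inl (enc g z)))

@[simp] lemma Phi0_inl_inl {n u s c : ℕ} (ι : Fin n ↪ Fin u × Fin s)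
    (enc : (Fin n → Fin n) → Fin c → Fin u) (c0 : Fin n) (g : Fin n → Fin n) (y : Fin u) :
    Phi0 ι enc c0 g (Sum.inl (Sum.inl y)) = Sum.inl (Sum.inl (ι (g c0)).1) := rfl

@[simp] lemma Phi0_inl_inr {n u s c : ℕ} (ι : Fin n ↪ Fin u × Fin s)
    (enc : (Fin n → Fin n) → Fin c → Fin u) (c0 : Fin n) (g : Fin n → Fin n) (y : Fin s) :
    Phi0 ι enc c0 g (Sum.inl (Sum.inr y)) = Sum.inl (Sum.inr (ι (g c0)).2) := rfl

@[simp] lemma Phi0_inr {n u s c : ℕ} (ι : Fin n ↪ Fin u × Fin s)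
    (enc : (Fin n → Fin n) → Fin c → Fin u) (c0 : Fin n) (g : Fin n → Fin n) (z : Fin c) :
    Phi0 ι enc c0 g (Sum.inr z) = Sum.inl (Sum.inl (enc g z)) := rfl

/-- Upper bound: explicit embedding of the variant into `T_{u+s+c}`. -/
lemma mem_S (n u s c : ℕ) (hn : 1 ≤ n) (a : Fin n → Fin n) (c0 : Fin n)
    (ha : ∀ x, a x = c0) (hus : n ≤ u * s) (hpow : n ^ (n - 1) ≤ u ^ c) :
    (u + s + c) ∈ {m | 1 ≤ m ∧ ∃ φ : (Fin n → Fin n) → (Fin m → Fin m),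
      Function.Injective φ ∧
      ∀ f g : Fin n → Fin n, φ (fun x => g (a (f x))) = tMul (φ f) (φ g)} := by
  classical
  have hu : 0 < u := by
    rcases Nat.eq_zero_or_pos u with h | h
    · subst h; simp at hus; omega
    · exact h
  have hs' : 0 < s := by
    rcases Nat.eq_zero_or_pos s with h | h
    · subst h; simp at hus; omega
    · exact h
  obtain ⟨ι⟩ : Nonempty (Fin n ↪ Fin u × Fin s) :=
    Function.Embedding.nonempty_of_card_le (by simpa [Fintype.card_prod] using hus)
  obtain ⟨ψ⟩ : Nonempty (({x : Fin n // x ≠ c0} → Fin n) ↪ (Fin c → Fin u)) :=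
    Function.Embedding.nonempty_of_card_le
      (by rw [card_restr, Fintype.card_fun]; simpa using hpow)
  set enc : (Fin n → Fin n) → (Fin c → Fin u) := fun g =>
    Equiv.swap (ψ (restrT c0 (fun _ => g c0))) (fun _ => (ι (g c0)).1) (ψ (restrT c0 g))
    with henc
  have enc_const : ∀ j : Fin n, enc (fun _ => j) = fun _ => (ι j).1 := by
    intro j
    simp only [henc]
    exact Equiv.swap_apply_left _ _
  have enc_inj : ∀ g g' : Fin n → Fin n, g c0 = g' c0 → enc g = enc g' → g = g' := by
    intro g g' h he
    simp only [henc] at he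
    rw [← h] at he
    have h2 := (Equiv.swap (ψ (restrT c0 (fun _ => g c0))) (fun _ => (ι (g c0)).1)).injective he
    exact eq_of_parts c0 h (ψ.injective h2)
  refine ⟨by omega, ?_⟩
  let e : ((Fin u ⊕ Fin s) ⊕ Fin c) ≃ Fin (u + s + c) :=
    (Equiv.sumCongr finSumFinEquiv (Equiv.refl (Fin c))).trans finSumFinEquiv
  refine ⟨fun g y => e (Phi0 ι enc c0 g (e.symm y)), ?_, ?_⟩
  · intro g g' hgg
    have hΦ : Phi0 ι enc c0 g = Phi0 ι enc c0 g' := by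
      funext z
      have h' := congrFun hgg (e z)
      simp only [Equiv.symm_apply_apply] at h'
      exact e.injective h'
    have h1 := congrFun hΦ (Sum.inl (Sum.inl ⟨0, hu⟩))
    have h2 := congrFun hΦ (Sum.inl (Sum.inr ⟨0, hs'⟩))
    simp only [Phi0_inl_inl, Phi0_inl_inr, Sum.inl.injEq, Sum.inr.injEq] at h1 h2
    have hc : g c0 = g' c0 := ι.injective (Prod.ext h1 h2)
    have h3 : enc g = enc g' := by
      funext z
      have h' := congrFun hΦ (Sum.inr z)
      simp only [Phi0_inr, Sum.inl.injEq] at h'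
      exact h'
    exact enc_inj g g' hc h3
  · intro f g
    have hfg : (fun x => g (a (f x))) = fun _ : Fin n => g c0 := funext fun x => by rw [ha]
    rw [hfg]
    funext y
    simp only [tMul, Equiv.symm_apply_apply]
    congr 1
    rcases e.symm y with (zu | zs) | zc
    · simp
    · simp
    · simp [enc_const]

/-- Lower bound: counting argument. -/
lemma lower_count {n m : ℕ} (hn : 1 ≤ n) (c0 : Fin n) (hm : 1 ≤ m)
    (φ : (Fin n → Fin n) → Fin m → Fin m) (hinj : Function.Injective φ)
    (hhom : ∀ f g : Fin n → Fin n, φ (fun _ => g c0) = tMul (φ f) (φ g)) :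
    ∃ w, w ≤ m ∧ n ^ (n - 1) ≤ w ^ (m - w) := by
  classical
  set W : Finset (Fin m) := Finset.univ.biUnion (fun g => Finset.univ.image (φ g)) with hW
  have memW : ∀ (g : Fin n → Fin n) (y : Fin m), φ g y ∈ W := by
    intro g y
    exact Finset.mem_biUnion.mpr
      ⟨g, Finset.mem_univ _, Finset.mem_image_of_mem _ (Finset.mem_univ _)⟩
  refine ⟨W.card, (Finset.card_le_univ W).trans_eq (by simp), ?_⟩
  let Θ : ({x : Fin n // x ≠ c0} → Fin n) → ((Wᶜ : Finset (Fin m)) → W) :=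
    fun h y => ⟨φ (extT c0 c0 h) y.1, memW _ _⟩
  have hΘ : Function.Injective Θ := by
    intro h h' he
    have key : φ (extT c0 c0 h) = φ (extT c0 c0 h') := by
      funext y
      by_cases hy : y ∈ W
      · obtain ⟨f, -, hf⟩ := Finset.mem_biUnion.mp hy
        obtain ⟨z, -, hz⟩ := Finset.mem_image.mp hf
        rw [← hz]
        have e1 : φ (extT c0 c0 h) (φ f z) = φ (fun _ => extT c0 c0 h c0) z := by
          rw [hhom f (extT c0 c0 h)]; rfl
        have e2 : φ (extT c0 c0 h') (φ f z) = φ (fun _ => extT c0 c0 h' c0) z := by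
          rw [hhom f (extT c0 c0 h')]; rfl
        rw [e1, e2, extT_c0, extT_c0]
      · have hy' : y ∈ (Wᶜ : Finset (Fin m)) := Finset.mem_compl.mpr hy
        exact congrArg Subtype.val (congrFun he ⟨y, hy'⟩)
    have h2 := hinj key
    have h3 := congrArg (restrT c0) h2
    rwa [restrT_extT, restrT_extT] at h3
  have hcard := Fintype.card_le_of_injective Θ hΘ
  rw [card_restr] at hcard
  rw [Fintype.card_fun, Fintype.card_coe, Fintype.card_coe, Finset.card_compl,
    Fintype.card_fin] at hcard
  exact hcard

lemma ln_lower {k : ℕ} (hk : 2 ≤ k) : 2 - 3 / (k : ℝ) < Real.log k := by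
  have hk0 : (0 : ℝ) < k := by positivity
  rcases eq_or_lt_of_le hk with h2 | h3
  · have hmul : Real.exp ((1 : ℝ) / 2) * Real.exp ((1 : ℝ) / 2) = Real.exp 1 := by
      rw [← Real.exp_add]; norm_num
    have hlt : Real.exp ((1 : ℝ) / 2) < 2 := by
      nlinarith [Real.exp_pos ((1 : ℝ) / 2), Real.exp_one_lt_d9]
    have hl : (1 / 2 : ℝ) < Real.log 2 :=
      (Real.lt_log_iff_exp_lt (by norm_num)).mpr hlt
    rw [← h2]
    push_cast
    linarith
  · have hk3 : (3 : ℝ) ≤ k := by exact_mod_cast h3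
    have hd : Real.log ((k : ℝ) / 3) = Real.log k - Real.log 3 :=
      Real.log_div (by positivity) (by norm_num)
    have hge : 1 - ((k : ℝ) / 3)⁻¹ ≤ Real.log ((k : ℝ) / 3) :=
      Real.one_sub_inv_le_log_of_pos (by positivity)
    have h3' : (1 : ℝ) < Real.log 3 :=
      (Real.lt_log_iff_exp_lt (by norm_num)).mpr (lt_trans Real.exp_one_lt_d9 (by norm_num))
    rw [inv_div] at hge
    have h33 : (3 : ℝ) / k ≤ 3 / k := le_refl _
    linarith

lemma two_k_le {k n : ℕ} (hk : 2 ≤ k) (hn : ⌈(k : ℝ) * Real.log k⌉₊ + 1 ≤ n) :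
    2 * k - 1 ≤ n := by
  have hceil : 2 * k - 3 < ⌈(k : ℝ) * Real.log k⌉₊ := by
    apply Nat.lt_ceil.mpr
    have hl := ln_lower hk
    have hk0 : (0 : ℝ) < k := by positivity
    have h32 : (3 : ℕ) ≤ 2 * k := by omega
    rw [Nat.cast_sub h32]
    push_cast
    have h5 : (k : ℝ) * (2 - 3 / (k : ℝ)) < (k : ℝ) * Real.log k :=
      mul_lt_mul_of_pos_left hl hk0
    have h6 : (k : ℝ) * (2 - 3 / (k : ℝ)) = 2 * (k : ℝ) - 3 := by
      field_simp
    linarith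
  omega

lemma kln_le {k n : ℕ} (hn1 : 1 ≤ n) (hn : ⌈(k : ℝ) * Real.log k⌉₊ + 1 ≤ n) :
    (k : ℝ) * Real.log k ≤ (n : ℝ) - 1 := by
  have h1 : (⌈(k : ℝ) * Real.log k⌉₊ : ℝ) ≤ (n : ℝ) - 1 := by
    have h2 : ⌈(k : ℝ) * Real.log k⌉₊ ≤ n - 1 := by omega
    have h3 := (Nat.cast_le (α := ℝ)).mpr h2
    rwa [Nat.cast_sub hn1, Nat.cast_one] at h3
  exact (Nat.le_ceil _).trans h1

/-- The key analytic inequality. -/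
lemma key_ineq {k n m w : ℕ} (hk : 2 ≤ k) (hn : ⌈(k : ℝ) * Real.log k⌉₊ + 1 ≤ n)
    (hm : m < n + k) (hm1 : 1 ≤ m) (hw : w ≤ m) : w ^ (m - w) < n ^ (n - 1) := by
  have hnk : 2 * k - 1 ≤ n := two_k_le hk hn
  have hn3 : 3 ≤ n := by omega
  have hkn : k + 1 ≤ n := by omega
  have hkln : (k : ℝ) * Real.log k ≤ (n : ℝ) - 1 := kln_le (by omega) hn
  rcases Nat.lt_or_ge w 2 with hw2 | hw2
  · interval_cases w
    · rw [Nat.zero_pow (by omega)]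
      exact Nat.pow_pos (by omega)
    · rw [one_pow]
      exact Nat.one_lt_pow (by omega) (by omega)
  -- now 2 ≤ w, work over ℝ
  have hwR : (2 : ℝ) ≤ w := by exact_mod_cast hw2
  have hw0 : (0 : ℝ) < w := by linarith
  have hwmR : (w : ℝ) ≤ m := by exact_mod_cast hw
  have hmR : (m : ℝ) + 1 ≤ (n : ℝ) + k := by exact_mod_cast hm
  have hkR : (2 : ℝ) ≤ k := by exact_mod_cast hk
  have hknR : (k : ℝ) + 1 ≤ n := by exact_mod_cast hkn
  have hnkR : 2 * (k : ℝ) ≤ (n : ℝ) + 1 := by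
    have : 2 * k ≤ n + 1 := by omega
    exact_mod_cast this
  have hn3R : (3 : ℝ) ≤ n := by exact_mod_cast hn3
  have hlogn_pos : 0 < Real.log n := Real.log_pos (by linarith)
  have main : ((m : ℝ) - w) * Real.log w < ((n : ℝ) - 1) * Real.log n := by
    rcases Nat.lt_or_ge w n with hwn | hwn
    · rcases Nat.lt_or_ge w k with hwk | hwk
      · -- Case C : 2 ≤ w < k
        have hwkR : (w : ℝ) < k := by exact_mod_cast hwk
        have hkpos : (0 : ℝ) < k := by linarith
        have hlogkw : ((k : ℝ) - w) / k ≤ Real.log ((k : ℝ) / w) := by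
          have h1 := Real.one_sub_inv_le_log_of_pos (show (0 : ℝ) < (k : ℝ) / w by positivity)
          rw [inv_div] at h1
          have h2 : ((k : ℝ) - w) / k = 1 - (w : ℝ) / k := by field_simp
          linarith
        have hlogw_le : Real.log w ≤ Real.log k := by
          have := Real.log_le_log_iff hw0 hkpos
          exact this.mpr (le_of_lt hwkR)
        have hstep : ((k : ℝ) - w) * Real.log w ≤ ((n : ℝ) - 1) * Real.log ((k : ℝ) / w) := by
          have h1 : ((k : ℝ) - w) * Real.log w ≤ ((k : ℝ) - w) * Real.log k :=
            mul_le_mul_of_nonneg_left hlogw_le (by linarith)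
          have h2 : ((k : ℝ) - w) * Real.log k = ((k : ℝ) * Real.log k) * (((k : ℝ) - w) / k) := by
            field_simp
          have hq0 : (0 : ℝ) ≤ ((k : ℝ) - w) / k :=
            div_nonneg (by linarith) (by linarith)
          have h3 : ((k : ℝ) * Real.log k) * (((k : ℝ) - w) / k) ≤
              ((n : ℝ) - 1) * (((k : ℝ) - w) / k) :=
            mul_le_mul_of_nonneg_right hkln hq0
          have h4 : ((n : ℝ) - 1) * (((k : ℝ) - w) / k) ≤ ((n : ℝ) - 1) * Real.log ((k : ℝ) / w) :=
            mul_le_mul_of_nonneg_left hlogkw (by linarith)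
          linarith
        have hkn2 : Real.log ((k : ℝ) / w) < Real.log ((n : ℝ) / w) := by
          apply Real.log_lt_log (by positivity)
          gcongr
          linarith
        have hsplit : Real.log ((n : ℝ) / w) = Real.log n - Real.log w :=
          Real.log_div (by linarith) (by linarith)
        have hM : (m : ℝ) - w ≤ ((n : ℝ) - 1) + ((k : ℝ) - w) := by linarith
        have hlw0 : 0 ≤ Real.log w := Real.log_nonneg (by linarith)
        have hmul := mul_lt_mul_of_pos_left hkn2 (show (0 : ℝ) < (n : ℝ) - 1 by linarith)
        calc ((m : ℝ) - w) * Real.log w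
            ≤ (((n : ℝ) - 1) + ((k : ℝ) - w)) * Real.log w :=
              mul_le_mul_of_nonneg_right hM hlw0
          _ = ((n : ℝ) - 1) * Real.log w + ((k : ℝ) - w) * Real.log w := by ring
          _ < ((n : ℝ) - 1) * Real.log w + ((n : ℝ) - 1) * Real.log ((n : ℝ) / w) := by
              linarith [hstep, hmul]
          _ = ((n : ℝ) - 1) * Real.log n := by rw [hsplit]; ring
      · -- Case B : k ≤ w < n
        have hwnR : (w : ℝ) < n := by exact_mod_cast hwn
        have hwkR : (k : ℝ) ≤ w := by exact_mod_cast hwk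
        have h1 : (m : ℝ) - w ≤ (n : ℝ) - 1 := by linarith
        have hlw0 : 0 ≤ Real.log w := Real.log_nonneg (by linarith)
        have hlog : Real.log w < Real.log n := Real.log_lt_log hw0 hwnR
        calc ((m : ℝ) - w) * Real.log w ≤ ((n : ℝ) - 1) * Real.log w :=
              mul_le_mul_of_nonneg_right h1 hlw0
          _ < ((n : ℝ) - 1) * Real.log n := by
              apply mul_lt_mul_of_pos_left hlog (by linarith)
    · -- Case A : n ≤ w
      have hwnR : (n : ℝ) ≤ w := by exact_mod_cast hwn
      have hlogw_pos : 0 < Real.log w := Real.log_pos (by linarith)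
      have h1 : (m : ℝ) - w ≤ (k : ℝ) - 1 := by linarith
      have hwn2 : (w : ℝ) < (n : ℝ) ^ (2 : ℕ) := by nlinarith [sq_nonneg ((n : ℝ) - 1)]
      have h2 : Real.log w < 2 * Real.log n := by
        have h3 : Real.log w < Real.log ((n : ℝ) ^ (2 : ℕ)) := Real.log_lt_log hw0 hwn2
        rwa [Real.log_pow, Nat.cast_ofNat] at h3
      calc ((m : ℝ) - w) * Real.log w ≤ ((k : ℝ) - 1) * Real.log w :=
            mul_le_mul_of_nonneg_right h1 hlogw_pos.le
        _ < ((k : ℝ) - 1) * (2 * Real.log n) := by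
            apply mul_lt_mul_of_pos_left h2 (by linarith)
        _ = (2 * (k : ℝ) - 2) * Real.log n := by ring
        _ ≤ ((n : ℝ) - 1) * Real.log n :=
            mul_le_mul_of_nonneg_right (by linarith) hlogn_pos.le
  -- convert back to ℕ
  have h1 : (0 : ℝ) < (w : ℝ) ^ (m - w) := by positivity
  have h2 : (0 : ℝ) < (n : ℝ) ^ (n - 1) := by positivity
  have hlt : ((w : ℝ)) ^ (m - w) < ((n : ℝ)) ^ (n - 1) := by
    rw [← Real.log_lt_log_iff h1 h2, Real.log_pow, Real.log_pow,
      Nat.cast_sub hw, Nat.cast_sub (by omega : 1 ≤ n), Nat.cast_one]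
    exact main
  exact_mod_cast hlt

end Aux

/-- Asymptotics of the degree `μ(n)` of rank-`1` variants of `T_n`. -/
theorem variant_degree_asymptotics :
    (∀ x : ℝ, 1 < x → x < 2 → ∃ N : ℕ, ∀ n : ℕ, N < n →
      ∀ a : Fin n → Fin n, trank a = 1 → (variantDegree n a : ℝ) ≤ x * n) ∧
    (∀ k : ℕ, 2 ≤ k → ∀ n : ℕ, ⌈(k : ℝ) * Real.log k⌉₊ + 1 ≤ n →
      ∀ a : Fin n → Fin n, trank a = 1 → n + k ≤ variantDegree n a) := by
  constructor
  · intro x hx1 hx2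
    have hx0 : (0 : ℝ) < x - 1 := by linarith
    obtain ⟨q, hq⟩ := pow_unbounded_of_one_lt (4 / (x - 1)) (by norm_num : (1 : ℝ) < 2)
    refine ⟨2 ^ (q + q * 2 ^ q) + ⌈(2 * ((2 ^ q : ℝ) + 2)) / (x - 1)⌉₊, ?_⟩
    intro n hn a ha
    obtain ⟨c0, hc0⟩ := rank_one_const ha
    set s := 2 ^ q with hs
    have hs0 : 0 < s := Nat.pow_pos (by norm_num)
    have h2p : 1 ≤ 2 ^ (q + q * s) := Nat.one_le_two_pow
    have hn1 : 1 ≤ n := by omega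
    set u := n / s + 1 with hu
    set cc := (n - 1) + ((n - 1) / s + 1) with hcc
    have hus : n ≤ u * s := le_of_lt ((Nat.div_lt_iff_lt_mul hs0).mp (Nat.lt_succ_self _))
    have hnbig : 2 ^ (q + q * s) ≤ n := by omega
    have hu2 : 2 ^ (q * s) ≤ u := by
      have h1 : 2 ^ (q * s) * s ≤ n := by
        calc 2 ^ (q * s) * s = 2 ^ (q * s + q) := by rw [hs, ← pow_add]
          _ ≤ n := by
              have hqq : q * s + q = q + q * s := by omega
              rw [hqq]; exact hnbig
      have h2 := (Nat.le_div_iff_mul_le hs0).mpr h1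
      omega
    have hpow : n ^ (n - 1) ≤ u ^ cc := by
      have hlt : n - 1 < ((n - 1) / s + 1) * s :=
        (Nat.div_lt_iff_lt_mul hs0).mp (Nat.lt_succ_self _)
      have hle : n - 1 ≤ s * ((n - 1) / s + 1) := by rw [Nat.mul_comm]; omega
      have hstep : s ^ (n - 1) ≤ u ^ ((n - 1) / s + 1) := by
        calc s ^ (n - 1) = 2 ^ (q * (n - 1)) := by rw [hs, ← pow_mul]
          _ ≤ 2 ^ (q * (s * ((n - 1) / s + 1))) :=
              Nat.pow_le_pow_right (by norm_num) (Nat.mul_le_mul_left q hle)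
          _ = (2 ^ (q * s)) ^ ((n - 1) / s + 1) := by rw [← pow_mul]; congr 1; ring
          _ ≤ u ^ ((n - 1) / s + 1) := Nat.pow_le_pow_left hu2 _
      calc n ^ (n - 1) ≤ (u * s) ^ (n - 1) := Nat.pow_le_pow_left hus _
        _ = u ^ (n - 1) * s ^ (n - 1) := mul_pow u s (n - 1)
        _ ≤ u ^ (n - 1) * u ^ ((n - 1) / s + 1) := Nat.mul_le_mul_left _ hstep
        _ = u ^ cc := by rw [hcc]; ring
    have hdeg : variantDegree n a ≤ u + s + cc :=
      Nat.sInf_le (mem_S n u s cc hn1 a c0 hc0 hus hpow)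
    have hsposR : (0 : ℝ) < (s : ℝ) := by exact_mod_cast hs0
    have hsR : (4 : ℝ) / (x - 1) < (s : ℝ) := by
      rw [hs]; push_cast; exact hq
    have hnR : (2 * ((s : ℝ) + 2)) / (x - 1) < (n : ℝ) := by
      have h1 : ⌈(2 * ((2 ^ q : ℝ) + 2)) / (x - 1)⌉₊ < n := by omega
      have h2 : ((2 * ((2 ^ q : ℝ) + 2)) / (x - 1)) ≤
          ((⌈(2 * ((2 ^ q : ℝ) + 2)) / (x - 1)⌉₊ : ℕ) : ℝ) := Nat.le_ceil _
      have h3 : ((⌈(2 * ((2 ^ q : ℝ) + 2)) / (x - 1)⌉₊ : ℕ) : ℝ) < n := by exact_mod_cast h1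
      have h4 : ((s : ℝ)) = (2 : ℝ) ^ q := by rw [hs]; push_cast; ring
      rw [h4]
      linarith
    have e1 : ((n / s : ℕ) : ℝ) ≤ (n : ℝ) / s := Nat.cast_div_le
    have e2 : (((n - 1) / s : ℕ) : ℝ) ≤ (n : ℝ) / s := by
      refine le_trans Nat.cast_div_le ?_
      gcongr
      exact_mod_cast Nat.sub_le n 1
    have e3 : ((n - 1 : ℕ) : ℝ) ≤ (n : ℝ) := by exact_mod_cast Nat.sub_le n 1
    have hcast : ((u + s + cc : ℕ) : ℝ) ≤ (n : ℝ) + 2 * ((n : ℝ) / s) + s + 2 := by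
      rw [hu, hcc]
      push_cast
      linarith
    have key1 : (n : ℝ) / s ≤ (x - 1) * n / 4 := by
      rw [div_le_iff₀ hsposR]
      rw [div_lt_iff₀ hx0] at hsR
      have hn0 : (0 : ℝ) ≤ n := by positivity
      nlinarith
    have key2 : (s : ℝ) + 2 ≤ (x - 1) * n / 2 := by
      rw [div_lt_iff₀ hx0] at hnR
      linarith
    have hfin : ((u + s + cc : ℕ) : ℝ) ≤ x * n := by nlinarith [key1, key2, hcast]
    calc (variantDegree n a : ℝ) ≤ ((u + s + cc : ℕ) : ℝ) := by exact_mod_cast hdeg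
      _ ≤ x * n := hfin
  · intro k hk n hn a ha
    obtain ⟨c0, hc0⟩ := rank_one_const ha
    have hn1 : 1 ≤ n := by omega
    have hmemS := mem_S n n 1 (n - 1) hn1 a c0 hc0 (by omega) (le_refl _)
    refine le_csInf ⟨_, hmemS⟩ ?_
    rintro m ⟨hm1, φ, hinj, hhom⟩
    have hhom' : ∀ f g : Fin n → Fin n, φ (fun _ => g c0) = tMul (φ f) (φ g) := by
      intro f g
      have h : (fun x => g (a (f x))) = (fun _ : Fin n => g c0) := funext fun x => by rw [hc0]
      rw [← h]
      exact hhom f g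
    by_contra hlt
    push_neg at hlt
    obtain ⟨w, hwm, hcount⟩ := lower_count hn1 c0 hm1 φ hinj hhom'
    exact absurd hcount (not_le.mpr (key_ineq hk hn hlt hm1 hwm))
end
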